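/- arXiv:1902.07242 — 6 statements merged into one kernel-verified Lean document; each statement's English description precedes it below -/
import Mathlib

section
/- Let c > 0 and let f be a meromorphic function on the open unit disk 𝔻 whose spherical derivative satisfies f^♯(z) ≥ c for all z ∈ 𝔻 (i.e. f ∈ ℱ_c). Then c ≤ 1/2. -/
open Complex Metric ComplexConjugate

open scoped Classical in
/-- The spherical derivative of a meromorphic function `f` on the unit disk:
`|f'(z)|/(1+|f(z)|^2)` where `f` is analytic, and `|(1/f)'(z)|/(1+|(1/f)(z)|^2)` at poles. -/
noncomputable def sphDeriv (f : ℂ → ℂ) (z : ℂ) : ℝ :=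
  if AnalyticAt ℂ f z then
    ‖deriv f z‖ / (1 + (‖f z‖) ^ 2)
  else
    ‖deriv (fun w => (f w)⁻¹) z‖ / (1 + (‖(f z)⁻¹‖) ^ 2)

/-- `f` is meromorphic on the open unit disk: at each point it is either analytic,
or has a pole, i.e. `1/f` is analytic there and vanishes there. -/
def MeroOnDisk (f : ℂ → ℂ) : Prop :=
  ∀ z ∈ ball (0 : ℂ) 1,
    AnalyticAt ℂ f z ∨ (AnalyticAt ℂ (fun w => (f w)⁻¹) z ∧ (f z)⁻¹ = 0)

/-- A meromorphic function on the unit disk is locally univalent: `f'(z) ≠ 0` at every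
point where `f` is analytic, and every pole is simple (`1/f` has a simple zero). -/
def LocUnivOnDisk (f : ℂ → ℂ) : Prop :=
  ∀ z ∈ ball (0 : ℂ) 1,
    (AnalyticAt ℂ f z → deriv f z ≠ 0) ∧
    (¬ AnalyticAt ℂ f z → deriv (fun w => (f w)⁻¹) z ≠ 0)

/-! ### Auxiliary machinery -/

open Filter Topology Set

lemma sphDeriv_of_analytic {f : ℂ → ℂ} {z : ℂ} (hA : AnalyticAt ℂ f z) :
    sphDeriv f z = ‖deriv f z‖ / (1 + (‖f z‖) ^ 2) := by
  unfold sphDeriv; rw [if_pos hA]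

lemma sphDeriv_of_not_analytic {f : ℂ → ℂ} {z : ℂ} (hA : ¬ AnalyticAt ℂ f z) :
    sphDeriv f z
      = ‖deriv (fun w => (f w)⁻¹) z‖ / (1 + (‖(f z)⁻¹‖) ^ 2) := by
  unfold sphDeriv; rw [if_neg hA]

/-- Key pointwise inequality: `|w-a|·|1+ā w| ≤ (1+|a|²)(1+|w|²)/2`. -/
lemma key_ineq (a w : ℂ) : ‖(w - a) * (1 + conj a * w)‖
    ≤ (1 + ‖a‖ ^ 2) * (1 + ‖w‖ ^ 2) / 2 := by
  rw [norm_mul]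
  have hid : ‖w - a‖ ^ 2 + ‖1 + conj a * w‖ ^ 2
      = (1 + ‖a‖ ^ 2) * (1 + ‖w‖ ^ 2) := by
    simp only [Complex.sq_norm, Complex.normSq_apply, Complex.sub_re, Complex.sub_im,
      Complex.add_re, Complex.add_im, Complex.mul_re, Complex.mul_im, Complex.conj_re,
      Complex.conj_im, Complex.one_re, Complex.one_im]
    ring
  nlinarith [norm_nonneg (w - a), norm_nonneg (1 + conj a * w),
    sq_nonneg (‖w - a‖ - ‖1 + conj a * w‖)]

lemma deriv_lower {c : ℝ} (hc : 0 < c) {f : ℂ → ℂ} {z : ℂ}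
    (hA : AnalyticAt ℂ f z) (hs : c ≤ sphDeriv f z) :
    c * (1 + ‖f z‖ ^ 2) ≤ ‖deriv f z‖ ∧ deriv f z ≠ 0 := by
  rw [sphDeriv_of_analytic hA] at hs
  have hpos : (0:ℝ) < 1 + ‖f z‖ ^ 2 := by positivity
  rw [le_div_iff₀ hpos] at hs
  have h1 : c * (1 + ‖f z‖ ^ 2) ≤ ‖deriv f z‖ := by linarith
  refine ⟨h1, fun h0 => ?_⟩
  rw [h0] at h1
  simp only [norm_zero] at h1
  nlinarith

lemma pole_punctured {f : ℂ → ℂ} (hf : MeroOnDisk f) {p : ℂ} (hp : p ∈ ball (0:ℂ) 1)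
    (hP : ¬ AnalyticAt ℂ f p) :
    ∀ᶠ w in 𝓝[≠] p, AnalyticAt ℂ f w ∧ w ∈ ball (0:ℂ) 1 := by
  obtain ⟨hF, hF0⟩ := (hf p hp).resolve_left hP
  have hball : ∀ᶠ w in 𝓝[≠] p, w ∈ ball (0:ℂ) 1 :=
    (isOpen_ball.eventually_mem hp).filter_mono nhdsWithin_le_nhds
  rcases hF.eventually_eq_zero_or_eventually_ne_zero with h | h
  · exfalso
    apply hP
    have hzero : (fun _ => (0:ℂ)) =ᶠ[𝓝 p] f := by
      filter_upwards [h] with w hw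
      exact (inv_eq_zero.mp hw).symm
    exact analyticAt_const.congr hzero
  · filter_upwards [h, hball] with w hw hwb
    exact ⟨(hf w hwb).resolve_right (fun hh => hw hh.2), hwb⟩

/-- The auxiliary function `g₀(z) = (f z - a)(1 + ā f z)/((1+|a|²) f'(z))`. -/
noncomputable def gAux (f : ℂ → ℂ) (a : ℂ) (z : ℂ) : ℂ :=
  ((f z - a) * (1 + conj a * f z)) / (((1 + ‖a‖ ^ 2 : ℝ) : ℂ) * deriv f z)

lemma kAux_ne (a : ℂ) : ((1 + ‖a‖ ^ 2 : ℝ) : ℂ) ≠ 0 := by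
  rw [Complex.ofReal_ne_zero]
  positivity

lemma gAux_bound {c : ℝ} (hc : 0 < c) {f : ℂ → ℂ} {z : ℂ} (a : ℂ)
    (hA : AnalyticAt ℂ f z) (hs : c ≤ sphDeriv f z) :
    ‖gAux f a z‖ ≤ 1 / (2 * c) := by
  obtain ⟨h1, h2⟩ := deriv_lower hc hA hs
  have hA1 : (0:ℝ) < 1 + ‖a‖ ^ 2 := by positivity
  have hW1 : (0:ℝ) < 1 + ‖f z‖ ^ 2 := by positivity
  have hdpos : (0:ℝ) < ‖deriv f z‖ := lt_of_lt_of_le (by positivity) h1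
  have hden : ‖((1 + ‖a‖ ^ 2 : ℝ) : ℂ) * deriv f z‖
      = (1 + ‖a‖ ^ 2) * ‖deriv f z‖ := by
    rw [norm_mul, Complex.norm_real, Real.norm_eq_abs, _root_.abs_of_nonneg (le_of_lt hA1)]
  rw [gAux, norm_div, hden]
  have hden_ge : (1 + ‖a‖ ^ 2) * (c * (1 + ‖f z‖ ^ 2))
      ≤ (1 + ‖a‖ ^ 2) * ‖deriv f z‖ :=
    mul_le_mul_of_nonneg_left h1 (le_of_lt hA1)
  calc ‖(f z - a) * (1 + conj a * f z)‖
        / ((1 + ‖a‖ ^ 2) * ‖deriv f z‖)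
      ≤ ((1 + ‖a‖ ^ 2) * (1 + ‖f z‖ ^ 2) / 2)
        / ((1 + ‖a‖ ^ 2) * (c * (1 + ‖f z‖ ^ 2))) := by
        apply div_le_div₀ (by positivity) (key_ineq a (f z)) (by positivity) hden_ge
    _ = 1 / (2 * c) := by
        field_simp

lemma deriv_analyticAt {f : ℂ → ℂ} {z : ℂ} (hA : AnalyticAt ℂ f z) :
    DifferentiableAt ℂ (deriv f) z := by
  have hAN : AnalyticOnNhd ℂ f {x | AnalyticAt ℂ f x} := fun x hx => hx
  exact (hAN.deriv z hA).differentiableAt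

lemma gAux_diff {c : ℝ} (hc : 0 < c) {f : ℂ → ℂ} {z : ℂ} (a : ℂ)
    (hA : AnalyticAt ℂ f z) (hs : c ≤ sphDeriv f z) :
    DifferentiableAt ℂ (gAux f a) z := by
  have hfd := hA.differentiableAt
  have hd := deriv_analyticAt hA
  have hne : ((1 + ‖a‖ ^ 2 : ℝ) : ℂ) * deriv f z ≠ 0 :=
    mul_ne_zero (kAux_ne a) (deriv_lower hc hA hs).2
  exact ((hfd.sub_const a).mul ((hfd.const_mul (conj a)).const_add 1)).div
    (hd.const_mul _) hne

/-- The core argument: if `f` is meromorphic on the disk with `sphDeriv ≥ c` and `f` is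
analytic at `0`, then `c ≤ 1/2`. -/
lemma core {c : ℝ} (hc : 0 < c) {f : ℂ → ℂ} (hf : MeroOnDisk f)
    (hge : ∀ z ∈ ball (0:ℂ) 1, c ≤ sphDeriv f z) (h0 : AnalyticAt ℂ f 0) :
    c ≤ 1 / 2 := by
  classical
  set a := f 0 with ha
  set M : ℝ := 1 / (2 * c) with hM
  have hMpos : 0 < M := by positivity
  set g : ℂ → ℂ := fun z => if AnalyticAt ℂ f z then gAux f a z
    else limUnder (𝓝[≠] z) (gAux f a) with hg
  -- g is differentiable and bounded on the ball
  have hprop : ∀ z ∈ ball (0:ℂ) 1, DifferentiableAt ℂ g z ∧ ‖g z‖ ≤ M := by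
    intro z hz
    by_cases hA : AnalyticAt ℂ f z
    · have hev : g =ᶠ[𝓝 z] gAux f a := by
        filter_upwards [(isOpen_analyticAt ℂ f).eventually_mem hA] with w hw
        simp only [hg, if_pos hw]
      refine ⟨hev.differentiableAt_iff.mpr (gAux_diff hc a hA (hge z hz)), ?_⟩
      have : g z = gAux f a z := by simp only [hg, if_pos hA]
      rw [this]
      exact gAux_bound hc a hA (hge z hz)
    · -- pole: removable singularity
      have hpunct := pole_punctured hf hz hA
      have hs : ∀ᶠ w in 𝓝 z, w ≠ z → (AnalyticAt ℂ f w ∧ w ∈ ball (0:ℂ) 1) :=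
        eventually_nhdsWithin_iff.mp hpunct
      set s : Set ℂ := {w | w ≠ z → (AnalyticAt ℂ f w ∧ w ∈ ball (0:ℂ) 1)} with hsdef
      have hsmem : s ∈ 𝓝 z := hs
      have hd : DifferentiableOn ℂ (gAux f a) (s \ {z}) := by
        intro w hw
        have hw' := hw.1 hw.2
        exact (gAux_diff hc a hw'.1 (hge w hw'.2)).differentiableWithinAt
      have hb : BddAbove (norm ∘ gAux f a '' (s \ {z})) := by
        refine ⟨M, ?_⟩
        rintro y ⟨w, hw, rfl⟩
        have hw' := hw.1 hw.2
        simp only [Function.comp_apply, hM]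
        exact gAux_bound hc a hw'.1 (hge w hw'.2)
      have hupd := Complex.differentiableOn_update_limUnder_of_bddAbove hsmem hd hb
      have hupd_at : DifferentiableAt ℂ
          (Function.update (gAux f a) z (limUnder (𝓝[≠] z) (gAux f a))) z :=
        hupd.differentiableAt hsmem
      have heq : g =ᶠ[𝓝 z]
          Function.update (gAux f a) z (limUnder (𝓝[≠] z) (gAux f a)) := by
        filter_upwards [hs] with w hw
        by_cases hwz : w = z
        · subst hwz
          simp only [hg, if_neg hA, Function.update_self]
        · rw [Function.update_of_ne hwz]
          simp only [hg, if_pos (hw hwz).1]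
      have htend : Tendsto (gAux f a) (𝓝[≠] z) (𝓝 (limUnder (𝓝[≠] z) (gAux f a))) := by
        apply Complex.tendsto_limUnder_of_differentiable_on_punctured_nhds_of_bounded_under
        · filter_upwards [hpunct] with w hw
          exact gAux_diff hc a hw.1 (hge w hw.2)
        · refine ⟨M + ‖gAux f a z‖, ?_⟩
          rw [eventually_map]
          filter_upwards [hpunct] with w hw
          calc ‖gAux f a w - gAux f a z‖
              ≤ ‖gAux f a w‖ + ‖gAux f a z‖ := norm_sub_le _ _
            _ ≤ M + ‖gAux f a z‖ := by
                rw [hM]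
                have := gAux_bound hc a hw.1 (hge w hw.2)
                linarith
      refine ⟨heq.differentiableAt_iff.mpr hupd_at, ?_⟩
      have hgz : g z = limUnder (𝓝[≠] z) (gAux f a) := by simp only [hg, if_neg hA]
      rw [hgz]
      apply le_of_tendsto htend.norm
      filter_upwards [hpunct] with w hw
      rw [hM]
      exact gAux_bound hc a hw.1 (hge w hw.2)
  -- value and derivative of g at 0
  have h0ball : (0:ℂ) ∈ ball (0:ℂ) 1 := mem_ball_self one_pos
  have hev0 : g =ᶠ[𝓝 0] gAux f a := by
    filter_upwards [(isOpen_analyticAt ℂ f).eventually_mem h0] with w hw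
    simp only [hg, if_pos hw]
  have hg0 : g 0 = 0 := by
    have : g 0 = gAux f a 0 := by simp only [hg, if_pos h0]
    rw [this, gAux, ← ha, sub_self, zero_mul, zero_div]
  obtain ⟨h1, hd0⟩ := deriv_lower hc h0 (hge 0 h0ball)
  have hderiv1 : deriv g 0 = 1 := by
    rw [hev0.deriv_eq]
    have hfd : HasDerivAt f (deriv f 0) 0 := h0.differentiableAt.hasDerivAt
    have hnum : HasDerivAt (fun z => (f z - a) * (1 + conj a * f z))
        (deriv f 0 * (1 + conj a * f 0) + (f 0 - a) * (conj a * deriv f 0)) 0 :=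
      (hfd.sub_const a).mul ((hfd.const_mul (conj a)).const_add 1)
    have hden : HasDerivAt (fun z => ((1 + ‖a‖ ^ 2 : ℝ) : ℂ) * deriv f z)
        (((1 + ‖a‖ ^ 2 : ℝ) : ℂ) * deriv (deriv f) 0) 0 :=
      ((deriv_analyticAt h0).hasDerivAt).const_mul _
    have hne : ((1 + ‖a‖ ^ 2 : ℝ) : ℂ) * deriv f 0 ≠ 0 :=
      mul_ne_zero (kAux_ne a) hd0
    have hq := hnum.div hden hne
    have hthis : deriv (gAux f a) 0 = _ := hq.deriv
    rw [hthis]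
    have hfa : f 0 - a = 0 := by rw [← ha, sub_self]
    have hk' : (1 : ℂ) + conj a * f 0 = ((1 + ‖a‖ ^ 2 : ℝ) : ℂ) := by
      rw [← ha]
      push_cast
      rw [mul_comm, Complex.mul_conj, Complex.normSq_eq_norm_sq]
      push_cast
      ring
    rw [hfa, hk']
    set k : ℂ := ((1 + ‖a‖ ^ 2 : ℝ) : ℂ) with hkdef
    have hkne : k ≠ 0 := kAux_ne a
    field_simp
    ring
  -- Schwarz-type estimate
  have hdOn : DifferentiableOn ℂ g (ball (0:ℂ) 1) :=
    fun z hz => (hprop z hz).1.differentiableWithinAt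
  have key : (1:ℝ) ≤ M := by
    by_contra hlt
    push_neg at hlt
    set R : ℝ := (M + 1) / 2 with hR
    have hmaps : Set.MapsTo g (ball (0:ℂ) 1) (ball (g 0) R) := by
      intro z hz
      rw [hg0, mem_ball, dist_zero_right]
      exact lt_of_le_of_lt (hprop z hz).2 (by rw [hR]; linarith)
    have hest := Complex.norm_deriv_le_div_of_mapsTo_ball hdOn (hmaps.mono_right ball_subset_closedBall) one_pos
    rw [hderiv1] at hest
    simp only [norm_one, div_one] at hest
    rw [hR] at hest
    linarith
  rw [hM, le_div_iff₀ (by positivity)] at key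
  linarith

/-! ### Swapping `f` and `1/f` -/

lemma mero_inv {f : ℂ → ℂ} (hf : MeroOnDisk f) (hge : ∀ z ∈ ball (0:ℂ) 1,
    (0:ℝ) < sphDeriv f z) : MeroOnDisk (fun w => (f w)⁻¹) := by
  intro z hz
  by_cases hA : AnalyticAt ℂ f z
  · by_cases h0 : f z = 0
    · right
      constructor
      · have : (fun w => ((f w)⁻¹)⁻¹) = f := by
          funext w; rw [inv_inv]
        rw [this]
        exact hA
      · rw [inv_inv, h0]
    · left
      exact hA.inv h0
  · left
    exact ((hf z hz).resolve_left hA).1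

lemma not_analytic_inv {c : ℝ} (hc : 0 < c) {f : ℂ → ℂ} {z : ℂ}
    (hA : AnalyticAt ℂ f z) (h0 : f z = 0) (hs : c ≤ sphDeriv f z) :
    ¬ AnalyticAt ℂ (fun w => (f w)⁻¹) z := by
  intro hF
  obtain ⟨h1, hd0⟩ := deriv_lower hc hA hs
  rcases hA.eventually_eq_zero_or_eventually_ne_zero with h | h
  · -- f ≡ 0 near z, so deriv f z = 0, contradiction
    apply hd0
    have hzero : f =ᶠ[𝓝 z] (fun _ => (0:ℂ)) := h
    rw [hzero.deriv_eq]
    simp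
  · -- f ≠ 0 in punctured nbhd, 1/f blows up, contradicting continuity of 1/f
    have hcont : Tendsto (fun w => (f w)⁻¹) (𝓝[≠] z) (𝓝 ((f z)⁻¹)) :=
      (hF.continuousAt.tendsto).mono_left nhdsWithin_le_nhds
    have hfz : Tendsto f (𝓝[≠] z) (𝓝 0) := by
      have := (hA.continuousAt.tendsto).mono_left (nhdsWithin_le_nhds (s := {z}ᶜ))
      rwa [h0] at this
    have habs : Tendsto (fun w => ‖f w‖) (𝓝[≠] z) (𝓝[>] 0) := by
      rw [tendsto_nhdsWithin_iff]
      constructor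
      · simpa using hfz.norm
      · filter_upwards [h] with w hw
        simpa [Set.mem_Ioi] using hw
    have hatTop : Tendsto (fun w => (‖f w‖)⁻¹) (𝓝[≠] z) atTop :=
      habs.inv_tendsto_nhdsGT_zero
    have hconv : Tendsto (fun w => (‖f w‖)⁻¹) (𝓝[≠] z)
        (𝓝 (‖(f z)⁻¹‖)) := by
      have := hcont.norm
      simpa [norm_inv] using this
    exact not_tendsto_nhds_of_tendsto_atTop hatTop _ hconv

lemma sphDeriv_inv_ge {c : ℝ} (hc : 0 < c) {f : ℂ → ℂ} (hf : MeroOnDisk f)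
    (hge : ∀ z ∈ ball (0:ℂ) 1, c ≤ sphDeriv f z) :
    ∀ z ∈ ball (0:ℂ) 1, c ≤ sphDeriv (fun w => (f w)⁻¹) z := by
  intro z hz
  have hinvinv : (fun w => ((f w)⁻¹)⁻¹) = f := by funext w; rw [inv_inv]
  by_cases hA : AnalyticAt ℂ f z
  · by_cases h0 : f z = 0
    · have hF := not_analytic_inv hc hA h0 (hge z hz)
      rw [sphDeriv_of_not_analytic hF]
      rw [hinvinv]
      rw [inv_inv]
      rw [← sphDeriv_of_analytic hA]
      exact hge z hz
    · have hF : AnalyticAt ℂ (fun w => (f w)⁻¹) z := hA.inv h0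
      rw [sphDeriv_of_analytic hF]
      have hdF : deriv (fun w => (f w)⁻¹) z = -deriv f z / f z ^ 2 :=
        deriv_inv'' hA.differentiableAt h0
      rw [hdF]
      have hges := hge z hz
      rw [sphDeriv_of_analytic hA] at hges
      have ht : ‖f z‖ ≠ 0 := by
        simpa [norm_eq_zero] using h0
      have htpos : 0 < ‖f z‖ := lt_of_le_of_ne (norm_nonneg _) (Ne.symm ht)
      have heq : ‖-deriv f z / f z ^ 2‖ / (1 + ‖(f z)⁻¹‖ ^ 2)
          = ‖deriv f z‖ / (1 + ‖f z‖ ^ 2) := by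
        rw [norm_div, norm_neg, norm_pow, norm_inv]
        have h2 : ‖f z‖ ^ 2 ≠ 0 := pow_ne_zero _ ht
        rw [div_div, mul_add, mul_one]
        congr 1
        field_simp
        ring
      rw [heq]
      exact hges
  · obtain ⟨hF, h0⟩ := (hf z hz).resolve_left hA
    rw [sphDeriv_of_analytic hF]
    have hges := hge z hz
    rw [sphDeriv_of_not_analytic hA] at hges
    rw [h0] at hges ⊢
    simpa using hges

/-- If `f` is meromorphic on the unit disk with spherical derivative `≥ c > 0`
everywhere, then `c ≤ 1/2`. -/
theorem c_le_half (c : ℝ) (hc : 0 < c) (f : ℂ → ℂ) (hf : MeroOnDisk f)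
    (hge : ∀ z ∈ ball (0 : ℂ) 1, c ≤ sphDeriv f z) :
    c ≤ 1 / 2 := by
  have h0ball : (0:ℂ) ∈ ball (0:ℂ) 1 := mem_ball_self one_pos
  by_cases h0 : AnalyticAt ℂ f 0
  · exact core hc hf hge h0
  · obtain ⟨hF, _⟩ := (hf 0 h0ball).resolve_left h0
    exact core hc (mero_inv hf (fun z hz => lt_of_lt_of_le hc (hge z hz)))
      (sphDeriv_inv_ge hc hf hge) hF
end

section
/- Let c > 0, let f be a meromorphic function on the open unit disk 𝔻 with f^♯(z) ≥ c for all z ∈ 𝔻 (i.e. f ∈ ℱ_c), and let z₀ ∈ 𝔻. Then f^♯(z₀) ≥ (1 − √(1 − 4c²(1 − |z₀|²)²))/(2c(1 − |z₀|²)²). -/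
open Complex Metric ComplexConjugate

lemma analyticAt_deriv' {f : ℂ → ℂ} {z : ℂ} (h : AnalyticAt ℂ f z) :
    AnalyticAt ℂ (deriv f) z := by
  obtain ⟨s, hs_mem, hs⟩ := h.eventually_analyticAt.exists_mem
  obtain ⟨t, hts, ht_open, hzt⟩ := _root_.mem_nhds_iff.mp hs_mem
  exact (AnalyticOnNhd.deriv (fun y hy => hs y (hts hy))) z hzt

lemma abs_sq_identity (a v : ℂ) :
    ‖1 + conj a * v‖^2 + ‖v - a‖^2
      = (1 + ‖v‖^2) * (1 + ‖a‖^2) := by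
  simp only [Complex.sq_norm, Complex.normSq_apply, Complex.add_re, Complex.add_im,
    Complex.sub_re, Complex.sub_im, Complex.mul_re, Complex.mul_im, Complex.one_re,
    Complex.one_im, Complex.conj_re, Complex.conj_im]
  ring

lemma abs_sq_identity' (a v : ℂ) :
    ‖v + conj a‖^2 + ‖1 - a * v‖^2
      = (1 + ‖v‖^2) * (1 + ‖a‖^2) := by
  simp only [Complex.sq_norm, Complex.normSq_apply, Complex.add_re, Complex.add_im,
    Complex.sub_re, Complex.sub_im, Complex.mul_re, Complex.mul_im, Complex.one_re,
    Complex.one_im, Complex.conj_re, Complex.conj_im]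
  ring

lemma final_algebra (c x s : ℝ) (hc : 0 < c) (hx : 0 < x) (hs : 0 < s)
    (h : 1/x + s^2 * x ≤ 1/c) :
    (1 - Real.sqrt (1 - 4*c^2*s^2)) / (2*c*s^2) ≤ x := by
  have h1 : c + c*s^2*x^2 ≤ x := by
    have h2 := mul_le_mul_of_nonneg_left h (le_of_lt (mul_pos hc hx))
    have e1 : c*x*(1/x + s^2*x) = c + c*s^2*x^2 := by field_simp
    have e2 : c*x*(1/c) = x := by field_simp
    rw [e1, e2] at h2
    exact h2
  have h3 : (0:ℝ) ≤ 4*c*s^2 := by positivity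
  have h4 := mul_le_mul_of_nonneg_left h1 h3
  have hsq : (2*c*s^2*x - 1)^2 ≤ 1 - 4*c^2*s^2 := by nlinarith [h4]
  have hsqrt : 1 - 2*c*s^2*x ≤ Real.sqrt (1 - 4*c^2*s^2) := by
    rcases le_or_gt (1 - 2*c*s^2*x) 0 with hle | hpos
    · exact le_trans hle (Real.sqrt_nonneg _)
    · have hDnn : (0:ℝ) ≤ 1 - 4*c^2*s^2 := le_trans (sq_nonneg _) hsq
      rw [Real.le_sqrt hpos.le hDnn]
      calc (1-2*c*s^2*x)^2 = (2*c*s^2*x-1)^2 := by ring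
        _ ≤ _ := hsq
  rw [div_le_iff₀ (by positivity : (0:ℝ) < 2*c*s^2)]
  linarith [hsqrt]

/-- Circle mean value property for a function analytic on the unit ball. -/
lemma meanValueCircle (h : ℂ → ℂ) (hh : ∀ z ∈ ball (0:ℂ) 1, AnalyticAt ℂ h z)
    (ρ : ℝ) (h0 : 0 < ρ) (h1 : ρ < 1) :
    (∫ t in (0:ℝ)..(2*Real.pi), h (circleMap 0 ρ t)) = (2*Real.pi : ℝ) • h 0 := by
  have hsub : closedBall (0:ℂ) ρ ⊆ ball (0:ℂ) 1 := by
    intro z hz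
    simp only [mem_closedBall, mem_ball] at hz ⊢
    linarith
  have hd : DiffContOnCl ℂ h (ball (0:ℂ) ρ) := by
    constructor
    · intro z hz
      exact ((hh z (hsub (ball_subset_closedBall hz))).differentiableAt).differentiableWithinAt
    · intro z hz
      rw [closure_ball (0:ℂ) (ne_of_gt h0)] at hz
      exact ((hh z (hsub hz)).continuousAt).continuousWithinAt
  have := hd.circleIntegral_sub_inv_smul (mem_ball_self h0)
  rw [circleIntegral] at this
  simp only [deriv_circleMap, sub_zero, smul_eq_mul] at this
  have heq : ∀ t : ℝ, circleMap 0 ρ t * I * ((circleMap 0 ρ t)⁻¹ * h (circleMap 0 ρ t))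
      = I * h (circleMap 0 ρ t) := by
    intro t
    have hne : circleMap 0 ρ t ≠ 0 := by simpa using circleMap_ne_center (c := (0:ℂ)) (θ := t) (ne_of_gt h0)
    field_simp
  rw [intervalIntegral.integral_congr (fun t _ => heq t)] at this
  rw [intervalIntegral.integral_const_mul] at this
  have hI : (I : ℂ) ≠ 0 := I_ne_zero
  have : (∫ t in (0:ℝ)..(2*Real.pi), h (circleMap 0 ρ t)) = 2 * Real.pi * h 0 := by
    have h2 : (2 * ↑Real.pi * I : ℂ) * h 0 = I * (2 * Real.pi * h 0) := by ring
    rw [h2] at this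
    exact mul_left_cancel₀ hI this
  rw [this]
  simp [real_smul]

lemma deriv_ne_of_ge (c : ℝ) (hc : 0 < c) (f : ℂ → ℂ)
    (hge : ∀ z ∈ ball (0:ℂ) 1, c ≤ sphDeriv f z) :
    ∀ z ∈ ball (0:ℂ) 1, (AnalyticAt ℂ f z → deriv f z ≠ 0) ∧
      (¬AnalyticAt ℂ f z → deriv (fun w => (f w)⁻¹) z ≠ 0) := by
  intro z hz
  have h := lt_of_lt_of_le hc (hge z hz)
  constructor
  · intro ha hcon
    unfold sphDeriv at h
    rw [if_pos ha, hcon] at h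
    simp at h
  · intro hn hcon
    unfold sphDeriv at h
    rw [if_neg hn, hcon] at h
    simp at h

lemma good_near_pole (c : ℝ) (hc : 0 < c) (f : ℂ → ℂ) (hf : MeroOnDisk f)
    (hge : ∀ z ∈ ball (0:ℂ) 1, c ≤ sphDeriv f z) :
    ∀ z ∈ ball (0:ℂ) 1, ¬AnalyticAt ℂ f z →
      ∀ᶠ ζ in nhds z, ζ ≠ z → AnalyticAt ℂ f ζ ∧ f ζ ≠ 0 := by
  intro z hz hn
  obtain ⟨hg, hg0⟩ := (hf z hz).resolve_left hn
  have hder : deriv (fun w => (f w)⁻¹) z ≠ 0 := (deriv_ne_of_ge c hc f hge z hz).2 hn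
  have hnz : ∀ᶠ ζ in nhdsWithin z {z}ᶜ, (f ζ)⁻¹ ≠ 0 := by
    rcases hg.eventually_eq_zero_or_eventually_ne_zero with h | h
    · exfalso
      apply hder
      have heq : (fun w => (f w)⁻¹) =ᶠ[nhds z] (fun _ => (0:ℂ)) := h
      rw [heq.deriv_eq]
      simp
    · exact h
  rw [eventually_nhdsWithin_iff] at hnz
  filter_upwards [hnz, hg.eventually_analyticAt] with ζ h1 h2 hne
  have hfi : (f ζ)⁻¹ ≠ 0 := h1 (by simpa using hne)
  refine ⟨?_, fun hcon => hfi (by simp [hcon])⟩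
  have h3 : AnalyticAt ℂ (fun w => ((f w)⁻¹)⁻¹) ζ := h2.inv hfi
  simpa only [inv_inv] using h3

/-- Core estimate: two analytic functions on the disk with `|A|+|B| ≤ 1/c`,
`B` having a double zero at `z₀` linked to `A`'s value there. -/
lemma core_s7 (c : ℝ) (hc : 0 < c) (z₀ : ℂ) (hz₀ : z₀ ∈ ball (0:ℂ) 1)
    (A B q u : ℂ → ℂ) (x : ℝ) (hx : 0 < x)
    (hA : ∀ z ∈ ball (0:ℂ) 1, AnalyticAt ℂ A z)
    (hB : ∀ z ∈ ball (0:ℂ) 1, AnalyticAt ℂ B z)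
    (hbd : ∀ z ∈ ball (0:ℂ) 1, ‖A z‖ + ‖B z‖ ≤ 1/c)
    (hq : AnalyticAt ℂ q z₀) (hu : AnalyticAt ℂ u z₀) (hq0 : q z₀ = 0)
    (hBloc : ∀ᶠ z in nhds z₀, B z = (q z)^2 * u z)
    (hα : ‖A z₀‖ = 1/x)
    (hval : ‖deriv q z₀‖ ^ 2 * ‖u z₀‖ = x) :
    1/x + (1 - ‖z₀‖^2)^2 * x ≤ 1/c := by
  have hz₀1 : ‖z₀‖ < 1 := by simpa [mem_ball, Complex.dist_eq] using hz₀
  set s : ℝ := 1 - ‖z₀‖^2 with hs_def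
  have hs : 0 < s := by
    have : ‖z₀‖ ^ 2 < 1 := by nlinarith [norm_nonneg z₀]
    simp [hs_def]; nlinarith
  -- the Möbius map φ
  set φ : ℂ → ℂ := fun w => (w + z₀) / (1 + conj z₀ * w) with hφ_def
  have hden : ∀ w : ℂ, ‖w‖ < 1 → (1 + conj z₀ * w) ≠ 0 := by
    intro w hw
    intro hcon
    have h1 : ‖conj z₀ * w‖ < 1 := by
      rw [norm_mul, Complex.norm_conj]
      nlinarith [norm_nonneg z₀, norm_nonneg w]
    have h2 : (conj z₀ * w) = -1 := by linear_combination hcon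
    rw [h2] at h1
    simp at h1
  have hφmem : ∀ w ∈ ball (0:ℂ) 1, φ w ∈ ball (0:ℂ) 1 := by
    intro w hw
    have hw1 : ‖w‖ < 1 := by simpa [mem_ball, Complex.dist_eq] using hw
    have hd := hden w hw1
    have key : Complex.normSq (1 + conj z₀ * w) - Complex.normSq (w + z₀)
        = (1 - Complex.normSq z₀) * (1 - Complex.normSq w) := by
      simp only [Complex.normSq_apply, Complex.add_re, Complex.add_im, Complex.mul_re,
        Complex.mul_im, Complex.one_re, Complex.one_im, Complex.conj_re, Complex.conj_im]
      ring
    have hnz : Complex.normSq z₀ < 1 := by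
      rw [← Complex.sq_norm]; nlinarith [norm_nonneg z₀]
    have hnw : Complex.normSq w < 1 := by
      rw [← Complex.sq_norm]; nlinarith [norm_nonneg w]
    have hpos : 0 < Complex.normSq (1 + conj z₀ * w) := by
      rwa [Complex.normSq_pos]
    have habs : Complex.normSq (w + z₀) < Complex.normSq (1 + conj z₀ * w) := by nlinarith
    simp only [mem_ball, Complex.dist_eq, sub_zero, hφ_def]
    rw [norm_div]
    rw [div_lt_one (norm_pos_iff.mpr hd)]
    have := Complex.sq_norm (w + z₀)
    have := Complex.sq_norm (1 + conj z₀ * w)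
    nlinarith [norm_nonneg (w + z₀), norm_nonneg (1 + conj z₀ * w)]
  have hφa : ∀ w ∈ ball (0:ℂ) 1, AnalyticAt ℂ φ w := by
    intro w hw
    have hw1 : ‖w‖ < 1 := by simpa [mem_ball, Complex.dist_eq] using hw
    exact (analyticAt_id.add analyticAt_const).div
      (analyticAt_const.add (analyticAt_const.mul analyticAt_id)) (hden w hw1)
  have hφ0 : φ 0 = z₀ := by simp [hφ_def]
  -- key identity : φ w - z₀ = w * (1 - conj z₀ * φ w)
  have hkey : ∀ w : ℂ, ‖w‖ < 1 → φ w - z₀ = w * (1 - conj z₀ * φ w) := by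
    intro w hw
    have hd := hden w hw
    simp only [hφ_def]
    have : (w + z₀) / (1 + conj z₀ * w) * (1 + conj z₀ * w) = w + z₀ := div_mul_cancel₀ _ hd
    linear_combination this
  have hφne : ∀ w : ℂ, w ≠ 0 → ‖w‖ < 1 → φ w ≠ z₀ := by
    intro w hw0 hw1 hcon
    have := hkey w hw1
    rw [hcon, sub_self] at this
    have h2 : 1 - conj z₀ * z₀ = 0 := by
      rcases mul_eq_zero.mp this.symm with h | h
      · exact absurd h hw0
      · exact h
    have h3 : conj z₀ * z₀ = ((Complex.normSq z₀ : ℝ) : ℂ) := by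
      rw [mul_comm, Complex.mul_conj]
    rw [h3] at h2
    have h4 : ((1 - Complex.normSq z₀ : ℝ) : ℂ) = 0 := by
      push_cast
      linear_combination h2
    have h5 : Complex.normSq z₀ = 1 := by
      have := Complex.ofReal_eq_zero.mp h4
      linarith
    have hnz : Complex.normSq z₀ < 1 := by
      rw [← Complex.sq_norm]; nlinarith [norm_nonneg z₀]
    linarith
  -- the function ψ
  set ψ : ℂ → ℂ := fun z => if z = z₀ then (deriv q z₀)^2 * u z₀ * ((1:ℂ) - conj z₀ * z₀)^2
      else B z * ((1:ℂ) - conj z₀ * z)^2 / (z - z₀)^2 with hψ_def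
  have habs_one_sub : ‖(1:ℂ) - conj z₀ * z₀‖ = s := by
    have h3 : conj z₀ * z₀ = ((Complex.normSq z₀ : ℝ) : ℂ) := by
      rw [mul_comm, Complex.mul_conj]
    rw [h3]
    have : ((1:ℂ) - ((Complex.normSq z₀ : ℝ) : ℂ)) = (((1 - Complex.normSq z₀ : ℝ)) : ℂ) := by
      push_cast; ring
    rw [this, Complex.norm_real, Real.norm_eq_abs]
    rw [abs_of_pos]
    · rw [hs_def, ← Complex.sq_norm]
    · rw [← Complex.sq_norm]; rw [hs_def] at hs; linarith
  have hψval : ‖ψ z₀‖ = x * s^2 := by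
    simp only [hψ_def, if_pos rfl]
    rw [norm_mul, norm_mul, norm_pow, norm_pow, habs_one_sub, hval]
  have hψa : ∀ z ∈ ball (0:ℂ) 1, AnalyticAt ℂ ψ z := by
    intro z hz
    by_cases hzz : z = z₀
    · subst hzz
      obtain ⟨p, hp⟩ := hq
      have hds : AnalyticAt ℂ (dslope q z) z := ⟨p.fslope, hp.has_fpower_series_dslope_fslope⟩
      have hF : AnalyticAt ℂ
          (fun ζ => (dslope q z ζ)^2 * u ζ * ((1:ℂ) - conj z * ζ)^2) z := by
        exact ((hds.pow 2).mul hu).mul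
          ((analyticAt_const.sub (analyticAt_const.mul analyticAt_id)).pow 2)
      apply hF.congr
      filter_upwards [hBloc] with ζ hζ
      by_cases hζz : ζ = z
      · subst hζz
        simp only [hψ_def, if_pos rfl, dslope_same]
      · have hne : ζ - z ≠ 0 := sub_ne_zero.mpr hζz
        simp only [hψ_def, if_neg hζz]
        rw [dslope_of_ne q hζz]
        rw [slope_def_field, hq0, hζ]
        field_simp
        simp only [sub_zero]
    · have hne : ∀ᶠ ζ in nhds z, ζ ≠ z₀ := eventually_ne_nhds hzz
      have hF : AnalyticAt ℂ
          (fun ζ => B ζ * ((1:ℂ) - conj z₀ * ζ)^2 / (ζ - z₀)^2) z := by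
        refine AnalyticAt.div ?_ ?_ ?_
        · exact (hB z hz).mul
            ((analyticAt_const.sub (analyticAt_const.mul analyticAt_id)).pow 2)
        · exact (analyticAt_id.sub analyticAt_const).pow 2
        · exact pow_ne_zero 2 (sub_ne_zero.mpr hzz)
      apply hF.congr
      filter_upwards [hne] with ζ hζ
      simp only [hψ_def, if_neg hζ]
  -- main per-radius estimate
  have hmain : ∀ ρ : ℝ, 0 < ρ → ρ < 1 → 1/x + ρ^2 * (x * s^2) ≤ 1/c := by
    intro ρ hρ0 hρ1
    set Ahat : ℂ → ℂ := fun w => A (φ w) with hAhat_def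
    set ψhat : ℂ → ℂ := fun w => ψ (φ w) with hψhat_def
    have hAhata : ∀ w ∈ ball (0:ℂ) 1, AnalyticAt ℂ Ahat w := fun w hw =>
      (hA _ (hφmem w hw)).comp (hφa w hw)
    have hψhata : ∀ w ∈ ball (0:ℂ) 1, AnalyticAt ℂ ψhat w := fun w hw =>
      (hψa _ (hφmem w hw)).comp (hφa w hw)
    have hI1 := meanValueCircle Ahat hAhata ρ hρ0 hρ1
    have hI2 := meanValueCircle ψhat hψhata ρ hρ0 hρ1
    have hA0 : Ahat 0 = A z₀ := by simp only [hAhat_def, hφ0]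
    have hψ0 : ψhat 0 = ψ z₀ := by simp only [hψhat_def, hφ0]
    -- continuity of integrands
    have hcmem : ∀ t : ℝ, circleMap 0 ρ t ∈ ball (0:ℂ) 1 := by
      intro t
      simp only [mem_ball, Complex.dist_eq, sub_zero]
      rw [norm_circleMap_zero, abs_of_pos hρ0]
      exact hρ1
    have hc1 : Continuous fun t : ℝ => Ahat (circleMap 0 ρ t) := by
      rw [continuous_iff_continuousAt]
      intro t
      exact ((hAhata _ (hcmem t)).continuousAt).comp (continuous_circleMap 0 ρ).continuousAt
    have hc2 : Continuous fun t : ℝ => ψhat (circleMap 0 ρ t) := by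
      rw [continuous_iff_continuousAt]
      intro t
      exact ((hψhata _ (hcmem t)).continuousAt).comp (continuous_circleMap 0 ρ).continuousAt
    -- pointwise bound on the circle
    have hptw : ∀ t : ℝ, ‖Ahat (circleMap 0 ρ t)‖
        + ρ^2 * ‖ψhat (circleMap 0 ρ t)‖ ≤ 1/c := by
      intro t
      set w : ℂ := circleMap 0 ρ t with hw_def
      have hwabs : ‖w‖ = ρ := by
        simp [hw_def, norm_circleMap_zero, abs_of_pos hρ0]
      have hw1 : ‖w‖ < 1 := by rw [hwabs]; exact hρ1
      have hw0 : w ≠ 0 := by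
        intro hcon
        rw [hcon] at hwabs
        simp at hwabs
        exact absurd hwabs.symm (ne_of_gt hρ0)
      have hwmem : w ∈ ball (0:ℂ) 1 := by
        simp only [mem_ball, Complex.dist_eq, sub_zero]; exact hw1
      have hφw : φ w ∈ ball (0:ℂ) 1 := hφmem w hwmem
      have hφwne : φ w ≠ z₀ := hφne w hw0 hw1
      have hk := hkey w hw1
      have hfac : (1:ℂ) - conj z₀ * φ w ≠ 0 := by
        intro hcon
        rw [hcon, mul_zero] at hk
        exact hφwne (by linear_combination hk)
      have hψw : ‖ψhat w‖ = ‖B (φ w)‖ / ρ^2 := by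
        simp only [hψhat_def, hψ_def, if_neg hφwne]
        rw [norm_div, norm_mul, norm_pow, norm_pow, hk]
        rw [norm_mul, mul_pow, hwabs]
        have h1 : ‖(1:ℂ) - conj z₀ * φ w‖ ≠ 0 := norm_ne_zero_iff.mpr hfac
        field_simp
      rw [hψw]
      have hρ2 : (0:ℝ) < ρ^2 := by positivity
      rw [mul_div_cancel₀ _ (ne_of_gt hρ2)]
      exact hbd (φ w) hφw
    -- put it together
    have h2π : (0:ℝ) < 2 * Real.pi := by positivity
    have hn1 : 2 * Real.pi * (1/x) ≤ ∫ t in (0:ℝ)..(2*Real.pi), ‖Ahat (circleMap 0 ρ t)‖ := by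
      have : ‖(2*Real.pi : ℝ) • Ahat 0‖ ≤ ∫ t in (0:ℝ)..(2*Real.pi), ‖Ahat (circleMap 0 ρ t)‖ := by
        rw [← hI1]
        exact intervalIntegral.norm_integral_le_integral_norm (le_of_lt h2π)
      rw [norm_smul, hA0] at this
      simpa [hα, abs_of_pos Real.pi_pos, one_div] using this
    have hn2 : 2 * Real.pi * (x * s^2) ≤ ∫ t in (0:ℝ)..(2*Real.pi), ‖ψhat (circleMap 0 ρ t)‖ := by
      have : ‖(2*Real.pi : ℝ) • ψhat 0‖ ≤ ∫ t in (0:ℝ)..(2*Real.pi), ‖ψhat (circleMap 0 ρ t)‖ := by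
        rw [← hI2]
        exact intervalIntegral.norm_integral_le_integral_norm (le_of_lt h2π)
      rw [norm_smul, hψ0] at this
      simpa [hψval, abs_of_pos Real.pi_pos, one_div] using this
    have hint1 : IntervalIntegrable (fun t : ℝ => ‖Ahat (circleMap 0 ρ t)‖)
        MeasureTheory.volume 0 (2*Real.pi) := (continuous_norm.comp hc1).intervalIntegrable _ _
    have hint2 : IntervalIntegrable (fun t : ℝ => ‖ψhat (circleMap 0 ρ t)‖)
        MeasureTheory.volume 0 (2*Real.pi) := (continuous_norm.comp hc2).intervalIntegrable _ _
    have hsum : (∫ t in (0:ℝ)..(2*Real.pi), (‖Ahat (circleMap 0 ρ t)‖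
        + ρ^2 * ‖ψhat (circleMap 0 ρ t)‖)) ≤ 2 * Real.pi * (1/c) := by
      have hconst : (∫ t in (0:ℝ)..(2*Real.pi), (1/c : ℝ)) = 2 * Real.pi * (1/c) := by
        rw [intervalIntegral.integral_const, smul_eq_mul]
        ring
      rw [← hconst]
      apply intervalIntegral.integral_mono_on (le_of_lt h2π)
      · exact hint1.add (hint2.const_mul _)
      · exact intervalIntegrable_const
      · intro t _
        exact hptw t
    rw [intervalIntegral.integral_add hint1 (hint2.const_mul _)] at hsum
    rw [intervalIntegral.integral_const_mul] at hsum
    have hρ2 : (0:ℝ) ≤ ρ^2 := by positivity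
    have hmul := mul_le_mul_of_nonneg_left hn2 hρ2
    have hsum2 : 2 * Real.pi * (1/x) + ρ^2 * (2 * Real.pi * (x * s^2)) ≤ 2 * Real.pi * (1/c) :=
      le_trans (add_le_add hn1 hmul) hsum
    have hfin : 2 * Real.pi * (1/x + ρ^2 * (x * s^2)) ≤ 2 * Real.pi * (1/c) := by
      calc 2 * Real.pi * (1/x + ρ^2 * (x * s^2))
          = 2 * Real.pi * (1/x) + ρ^2 * (2 * Real.pi * (x * s^2)) := by ring
        _ ≤ 2 * Real.pi * (1/c) := hsum2
    exact le_of_mul_le_mul_left hfin h2π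
  -- pass to the limit ρ → 1
  have hlim : Filter.Tendsto (fun ρ : ℝ => 1/x + ρ^2 * (x * s^2)) (nhdsWithin 1 (Set.Iio 1))
      (nhds (1/x + 1^2 * (x * s^2))) := by
    apply Filter.Tendsto.mono_left _ nhdsWithin_le_nhds
    exact ((continuous_const.add ((continuous_pow 2).mul continuous_const)).tendsto 1)
  have hev : ∀ᶠ ρ in nhdsWithin (1:ℝ) (Set.Iio 1), 1/x + ρ^2 * (x * s^2) ≤ 1/c := by
    filter_upwards [Ioo_mem_nhdsLT_of_mem (by constructor <;> norm_num : (1:ℝ) ∈ Set.Ioc 0 1)]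
      with ρ hρ
    exact hmain ρ hρ.1 hρ.2
  have := le_of_tendsto hlim hev
  calc 1/x + (1 - ‖z₀‖^2)^2 * x = 1/x + 1^2 * (x * s^2) := by rw [hs_def]; ring
    _ ≤ 1/c := this

/-- Lower bound for the spherical derivative of `f ∈ ℱ_c` at any point of the disk. -/
theorem sphDeriv_lower (c : ℝ) (hc : 0 < c) (f : ℂ → ℂ) (hf : MeroOnDisk f)
    (hge : ∀ z ∈ ball (0 : ℂ) 1, c ≤ sphDeriv f z) (z₀ : ℂ) (hz₀ : z₀ ∈ ball (0 : ℂ) 1) :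
    (1 - Real.sqrt (1 - 4 * c ^ 2 * (1 - ‖z₀‖ ^ 2) ^ 2)) /
        (2 * c * (1 - ‖z₀‖ ^ 2) ^ 2) ≤ sphDeriv f z₀ := by
  classical
  have hz₀1 : ‖z₀‖ < 1 := by simpa [mem_ball, Complex.dist_eq] using hz₀
  have hs : 0 < 1 - ‖z₀‖^2 := by nlinarith [norm_nonneg z₀]
  have hderivs := deriv_ne_of_ge c hc f hge
  have hgood := good_near_pole c hc f hf hge
  have hx0 : 0 < sphDeriv f z₀ := lt_of_lt_of_le hc (hge z₀ hz₀)
  by_cases hA0 : AnalyticAt ℂ f z₀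
  · -- f analytic at z₀
    have hxval : sphDeriv f z₀ = ‖deriv f z₀‖ / (1 + ‖f z₀‖^2) := by
      unfold sphDeriv; rw [if_pos hA0]
    have hd₀ : deriv f z₀ ≠ 0 := (hderivs z₀ hz₀).1 hA0
    set w₀ : ℂ := f z₀ with hw₀
    set kr : ℝ := 1 + ‖w₀‖^2 with hkr_def
    have hkr : 0 < kr := by positivity
    have hkc : ((kr:ℝ) : ℂ) ≠ 0 := by
      simp only [ne_eq, Complex.ofReal_eq_zero]
      exact ne_of_gt hkr
    have habskr : ‖((kr:ℝ) : ℂ)‖ = kr := by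
      rw [Complex.norm_real, Real.norm_eq_abs]; exact abs_of_pos hkr
    set A : ℂ → ℂ := fun z => if AnalyticAt ℂ f z
        then (1 + conj w₀ * f z)^2 / (((kr:ℝ):ℂ) * deriv f z)
        else -((f z)⁻¹ + conj w₀)^2 / (((kr:ℝ):ℂ) * deriv (fun w => (f w)⁻¹) z) with hA_def
    set B : ℂ → ℂ := fun z => if AnalyticAt ℂ f z
        then (f z - w₀)^2 / (((kr:ℝ):ℂ) * deriv f z)
        else -(1 - w₀ * (f z)⁻¹)^2 / (((kr:ℝ):ℂ) * deriv (fun w => (f w)⁻¹) z) with hB_def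
    have hcross : ∀ ζ, AnalyticAt ℂ f ζ → f ζ ≠ 0 → deriv f ζ ≠ 0 →
        (-((f ζ)⁻¹ + conj w₀)^2 / (((kr:ℝ):ℂ) * deriv (fun w => (f w)⁻¹) ζ)
            = (1 + conj w₀ * f ζ)^2 / (((kr:ℝ):ℂ) * deriv f ζ)
        ∧ -(1 - w₀ * (f ζ)⁻¹)^2 / (((kr:ℝ):ℂ) * deriv (fun w => (f w)⁻¹) ζ)
            = (f ζ - w₀)^2 / (((kr:ℝ):ℂ) * deriv f ζ)) := by
      intro ζ h1 h2 h3
      rw [show (fun w => (f w)⁻¹) = f⁻¹ from rfl, deriv_inv'' h1.differentiableAt h2]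
      constructor
      · field_simp
      · field_simp
    have hAa : ∀ z ∈ ball (0:ℂ) 1, AnalyticAt ℂ A z := by
      intro z hz
      by_cases hzf : AnalyticAt ℂ f z
      · have hd := (hderivs z hz).1 hzf
        have hE : AnalyticAt ℂ
            (fun ζ => (1 + conj w₀ * f ζ)^2 / (((kr:ℝ):ℂ) * deriv f ζ)) z :=
          ((analyticAt_const.add (analyticAt_const.mul hzf)).pow 2).div
            (analyticAt_const.mul (analyticAt_deriv' hzf)) (mul_ne_zero hkc hd)
        apply hE.congr
        filter_upwards [hzf.eventually_analyticAt] with ζ hζ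
        simp only [hA_def, hζ, if_true]
      · have hd := (hderivs z hz).2 hzf
        obtain ⟨hg, hg0⟩ := (hf z hz).resolve_left hzf
        have hE : AnalyticAt ℂ
            (fun ζ => -((f ζ)⁻¹ + conj w₀)^2 / (((kr:ℝ):ℂ) * deriv (fun w => (f w)⁻¹) ζ)) z :=
          (((hg.add analyticAt_const).pow 2).neg).div
            (analyticAt_const.mul (analyticAt_deriv' hg)) (mul_ne_zero hkc hd)
        apply hE.congr
        have hball : ∀ᶠ ζ in nhds z, ζ ∈ ball (0:ℂ) 1 := isOpen_ball.eventually_mem hz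
        filter_upwards [hgood z hz hzf, hball] with ζ hζgood hζball
        by_cases hζz : ζ = z
        · subst hζz
          simp only [hA_def, hzf, if_false]
        · obtain ⟨hfa, hfne⟩ := hζgood hζz
          have hdζ := (hderivs ζ hζball).1 hfa
          simp only [hA_def, hfa, if_true]
          exact (hcross ζ hfa hfne hdζ).1
    have hBa : ∀ z ∈ ball (0:ℂ) 1, AnalyticAt ℂ B z := by
      intro z hz
      by_cases hzf : AnalyticAt ℂ f z
      · have hd := (hderivs z hz).1 hzf
        have hE : AnalyticAt ℂ
            (fun ζ => (f ζ - w₀)^2 / (((kr:ℝ):ℂ) * deriv f ζ)) z :=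
          ((hzf.sub analyticAt_const).pow 2).div
            (analyticAt_const.mul (analyticAt_deriv' hzf)) (mul_ne_zero hkc hd)
        apply hE.congr
        filter_upwards [hzf.eventually_analyticAt] with ζ hζ
        simp only [hB_def, hζ, if_true]
      · have hd := (hderivs z hz).2 hzf
        obtain ⟨hg, hg0⟩ := (hf z hz).resolve_left hzf
        have hE : AnalyticAt ℂ
            (fun ζ => -(1 - w₀ * (f ζ)⁻¹)^2 / (((kr:ℝ):ℂ) * deriv (fun w => (f w)⁻¹) ζ)) z :=
          (((analyticAt_const.sub (analyticAt_const.mul hg)).pow 2).neg).div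
            (analyticAt_const.mul (analyticAt_deriv' hg)) (mul_ne_zero hkc hd)
        apply hE.congr
        have hball : ∀ᶠ ζ in nhds z, ζ ∈ ball (0:ℂ) 1 := isOpen_ball.eventually_mem hz
        filter_upwards [hgood z hz hzf, hball] with ζ hζgood hζball
        by_cases hζz : ζ = z
        · subst hζz
          simp only [hB_def, hzf, if_false]
        · obtain ⟨hfa, hfne⟩ := hζgood hζz
          have hdζ := (hderivs ζ hζball).1 hfa
          simp only [hB_def, hfa, if_true]
          exact (hcross ζ hfa hfne hdζ).2
    have hbd : ∀ z ∈ ball (0:ℂ) 1, ‖A z‖ + ‖B z‖ ≤ 1/c := by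
      intro z hz
      have hsph := hge z hz
      by_cases hzf : AnalyticAt ℂ f z
      · have hd := (hderivs z hz).1 hzf
        have hdpos : 0 < ‖deriv f z‖ := norm_pos_iff.mpr hd
        have hsval : sphDeriv f z = ‖deriv f z‖ / (1 + ‖f z‖^2) := by
          unfold sphDeriv; rw [if_pos hzf]
        rw [hsval] at hsph
        have hmpos : (0:ℝ) < 1 + ‖f z‖^2 := by positivity
        rw [le_div_iff₀ hmpos] at hsph
        simp only [hA_def, hB_def, hzf, if_true]
        rw [norm_div, norm_div, norm_pow, norm_pow, norm_mul, habskr, ← add_div]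
        rw [abs_sq_identity w₀ (f z)]
        have heq : (1 + ‖f z‖^2) * (1 + ‖w₀‖^2)
            / (kr * ‖deriv f z‖)
            = (1 + ‖f z‖^2) / ‖deriv f z‖ := by
          rw [hkr_def]
          field_simp
        rw [heq, div_le_div_iff₀ hdpos hc]
        nlinarith [hsph]
      · have hd := (hderivs z hz).2 hzf
        obtain ⟨hg, hg0⟩ := (hf z hz).resolve_left hzf
        have hdpos : 0 < ‖deriv (fun w => (f w)⁻¹) z‖ := norm_pos_iff.mpr hd
        have hsval : sphDeriv f z = ‖deriv (fun w => (f w)⁻¹) z‖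
            / (1 + ‖(f z)⁻¹‖^2) := by
          unfold sphDeriv; rw [if_neg hzf]
        rw [hsval] at hsph
        have hmpos : (0:ℝ) < 1 + ‖(f z)⁻¹‖^2 := by positivity
        rw [le_div_iff₀ hmpos] at hsph
        simp only [hA_def, hB_def, hzf, if_false]
        rw [norm_div, norm_div, norm_neg, norm_neg,
          norm_pow, norm_pow, norm_mul, habskr, ← add_div]
        rw [abs_sq_identity' w₀ ((f z)⁻¹)]
        have heq : ∀ m d : ℝ, d ≠ 0 → (1 + m^2) * (1 + ‖w₀‖^2) / (kr * d)
            = (1 + m^2) / d := by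
          intro m d hdne
          rw [hkr_def]
          field_simp
        rw [heq _ _ (ne_of_gt hdpos), div_le_div_iff₀ hdpos hc]
        nlinarith [hsph]
    -- data at z₀ for `core`
    have hdfa : AnalyticAt ℂ (deriv f) z₀ := analyticAt_deriv' hA0
    have hq : AnalyticAt ℂ (fun z => f z - w₀) z₀ := hA0.sub analyticAt_const
    have hu : AnalyticAt ℂ (fun z => (((kr:ℝ):ℂ) * deriv f z)⁻¹) z₀ :=
      (analyticAt_const.mul hdfa).inv (mul_ne_zero hkc hd₀)
    have hq0 : (fun z => f z - w₀) z₀ = 0 := by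
      simp only
      rw [hw₀, sub_self]
    have hBloc : ∀ᶠ z in nhds z₀, B z = ((fun z => f z - w₀) z)^2
        * ((fun z => (((kr:ℝ):ℂ) * deriv f z)⁻¹) z) := by
      filter_upwards [hA0.eventually_analyticAt] with ζ hζ
      simp only [hB_def, hζ, if_true, div_eq_mul_inv]
    have hone : (1:ℂ) + conj w₀ * w₀ = ((kr:ℝ):ℂ) := by
      rw [mul_comm, Complex.mul_conj, hkr_def]
      push_cast [← Complex.sq_norm]
      ring
    have hα : ‖A z₀‖ = 1 / sphDeriv f z₀ := by
      have hAz₀ : A z₀ = ((kr:ℝ):ℂ) / deriv f z₀ := by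
        simp only [hA_def, hA0, if_true, ← hw₀, hone]
        field_simp
      rw [hAz₀, norm_div, habskr, hxval]
      rw [one_div_div]
    have hval : ‖deriv (fun z => f z - w₀) z₀‖^2
        * ‖(fun z => (((kr:ℝ):ℂ) * deriv f z)⁻¹) z₀‖ = sphDeriv f z₀ := by
      simp only
      rw [deriv_sub_const, norm_inv, norm_mul, habskr, hxval]
      have hdpos₀ : 0 < ‖deriv f z₀‖ := norm_pos_iff.mpr hd₀
      field_simp
    have hcore := core_s7 c hc z₀ hz₀ A B (fun z => f z - w₀)
      (fun z => (((kr:ℝ):ℂ) * deriv f z)⁻¹) (sphDeriv f z₀) hx0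
      hAa hBa hbd hq hu hq0 hBloc hα hval
    exact final_algebra c (sphDeriv f z₀) (1 - ‖z₀‖^2) hc hx0 hs hcore
  · -- f has a pole at z₀
    obtain ⟨hg0a, hg00⟩ := (hf z₀ hz₀).resolve_left hA0
    have hd₀ : deriv (fun w => (f w)⁻¹) z₀ ≠ 0 := (hderivs z₀ hz₀).2 hA0
    have hxval : sphDeriv f z₀ = ‖deriv (fun w => (f w)⁻¹) z₀‖ := by
      unfold sphDeriv
      rw [if_neg hA0, hg00]
      simp
    set A : ℂ → ℂ := fun z => if AnalyticAt ℂ f z then -(f z)^2 / deriv f z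
        else (deriv (fun w => (f w)⁻¹) z)⁻¹ with hA_def
    set B : ℂ → ℂ := fun z => if AnalyticAt ℂ f z then -(deriv f z)⁻¹
        else ((f z)⁻¹)^2 / deriv (fun w => (f w)⁻¹) z with hB_def
    have hcross : ∀ ζ, AnalyticAt ℂ f ζ → f ζ ≠ 0 → deriv f ζ ≠ 0 →
        ((deriv (fun w => (f w)⁻¹) ζ)⁻¹ = -(f ζ)^2 / deriv f ζ
        ∧ ((f ζ)⁻¹)^2 / deriv (fun w => (f w)⁻¹) ζ = -(deriv f ζ)⁻¹) := by
      intro ζ h1 h2 h3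
      rw [show (fun w => (f w)⁻¹) = f⁻¹ from rfl, deriv_inv'' h1.differentiableAt h2]
      constructor
      · field_simp
      · field_simp
    have hAa : ∀ z ∈ ball (0:ℂ) 1, AnalyticAt ℂ A z := by
      intro z hz
      by_cases hzf : AnalyticAt ℂ f z
      · have hd := (hderivs z hz).1 hzf
        have hE : AnalyticAt ℂ (fun ζ => -(f ζ)^2 / deriv f ζ) z :=
          ((hzf.pow 2).neg).div (analyticAt_deriv' hzf) hd
        apply hE.congr
        filter_upwards [hzf.eventually_analyticAt] with ζ hζ
        simp only [hA_def, hζ, if_true]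
      · have hd := (hderivs z hz).2 hzf
        obtain ⟨hg, hg0⟩ := (hf z hz).resolve_left hzf
        have hE : AnalyticAt ℂ (fun ζ => (deriv (fun w => (f w)⁻¹) ζ)⁻¹) z :=
          (analyticAt_deriv' hg).inv hd
        apply hE.congr
        have hball : ∀ᶠ ζ in nhds z, ζ ∈ ball (0:ℂ) 1 := isOpen_ball.eventually_mem hz
        filter_upwards [hgood z hz hzf, hball] with ζ hζgood hζball
        by_cases hζz : ζ = z
        · subst hζz
          simp only [hA_def, hzf, if_false]
        · obtain ⟨hfa, hfne⟩ := hζgood hζz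
          have hdζ := (hderivs ζ hζball).1 hfa
          simp only [hA_def, hfa, if_true]
          exact (hcross ζ hfa hfne hdζ).1
    have hBa : ∀ z ∈ ball (0:ℂ) 1, AnalyticAt ℂ B z := by
      intro z hz
      by_cases hzf : AnalyticAt ℂ f z
      · have hd := (hderivs z hz).1 hzf
        have hE : AnalyticAt ℂ (fun ζ => -(deriv f ζ)⁻¹) z :=
          ((analyticAt_deriv' hzf).inv hd).neg
        apply hE.congr
        filter_upwards [hzf.eventually_analyticAt] with ζ hζ
        simp only [hB_def, hζ, if_true]
      · have hd := (hderivs z hz).2 hzf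
        obtain ⟨hg, hg0⟩ := (hf z hz).resolve_left hzf
        have hE : AnalyticAt ℂ (fun ζ => ((f ζ)⁻¹)^2 / deriv (fun w => (f w)⁻¹) ζ) z :=
          (hg.pow 2).div (analyticAt_deriv' hg) hd
        apply hE.congr
        have hball : ∀ᶠ ζ in nhds z, ζ ∈ ball (0:ℂ) 1 := isOpen_ball.eventually_mem hz
        filter_upwards [hgood z hz hzf, hball] with ζ hζgood hζball
        by_cases hζz : ζ = z
        · subst hζz
          simp only [hB_def, hzf, if_false]
        · obtain ⟨hfa, hfne⟩ := hζgood hζz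
          have hdζ := (hderivs ζ hζball).1 hfa
          simp only [hB_def, hfa, if_true]
          exact (hcross ζ hfa hfne hdζ).2
    have hbd : ∀ z ∈ ball (0:ℂ) 1, ‖A z‖ + ‖B z‖ ≤ 1/c := by
      intro z hz
      have hsph := hge z hz
      by_cases hzf : AnalyticAt ℂ f z
      · have hd := (hderivs z hz).1 hzf
        have hdpos : 0 < ‖deriv f z‖ := norm_pos_iff.mpr hd
        have hsval : sphDeriv f z = ‖deriv f z‖ / (1 + ‖f z‖^2) := by
          unfold sphDeriv; rw [if_pos hzf]
        rw [hsval] at hsph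
        have hmpos : (0:ℝ) < 1 + ‖f z‖^2 := by positivity
        rw [le_div_iff₀ hmpos] at hsph
        simp only [hA_def, hB_def, hzf, if_true]
        rw [norm_div, norm_neg, norm_neg, norm_pow, norm_inv]
        have heq : ‖f z‖^2 / ‖deriv f z‖
            + (‖deriv f z‖)⁻¹
            = (1 + ‖f z‖^2) / ‖deriv f z‖ := by
          field_simp
          ring
        rw [heq, div_le_div_iff₀ hdpos hc]
        nlinarith [hsph]
      · have hd := (hderivs z hz).2 hzf
        obtain ⟨hg, hg0⟩ := (hf z hz).resolve_left hzf
        have hdpos : 0 < ‖deriv (fun w => (f w)⁻¹) z‖ := norm_pos_iff.mpr hd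
        have hsval : sphDeriv f z = ‖deriv (fun w => (f w)⁻¹) z‖
            / (1 + ‖(f z)⁻¹‖^2) := by
          unfold sphDeriv; rw [if_neg hzf]
        rw [hsval] at hsph
        have hmpos : (0:ℝ) < 1 + ‖(f z)⁻¹‖^2 := by positivity
        rw [le_div_iff₀ hmpos] at hsph
        simp only [hA_def, hB_def, hzf, if_false]
        rw [norm_inv, norm_div, norm_pow]
        have heq : ∀ m d : ℝ, 0 < d → d⁻¹ + m^2 / d = (1 + m^2) / d := by
          intro m d hdp
          field_simp
        rw [heq _ _ hdpos, div_le_div_iff₀ hdpos hc]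
        nlinarith [hsph]
    -- data at z₀ for `core`
    have hu : AnalyticAt ℂ (fun z => (deriv (fun w => (f w)⁻¹) z)⁻¹) z₀ :=
      (analyticAt_deriv' hg0a).inv hd₀
    have hBloc : ∀ᶠ z in nhds z₀, B z = ((fun w => (f w)⁻¹) z)^2
        * ((fun z => (deriv (fun w => (f w)⁻¹) z)⁻¹) z) := by
      have hball : ∀ᶠ ζ in nhds z₀, ζ ∈ ball (0:ℂ) 1 := isOpen_ball.eventually_mem hz₀
      filter_upwards [hgood z₀ hz₀ hA0, hball] with ζ h1 h2
      by_cases hζz : ζ = z₀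
      · subst hζz
        simp only [hB_def, hA0, if_false, div_eq_mul_inv]
      · obtain ⟨hfa, hfne⟩ := h1 hζz
        have hdζ := (hderivs ζ h2).1 hfa
        simp only [hB_def, hfa, if_true]
        rw [← div_eq_mul_inv]
        exact (hcross ζ hfa hfne hdζ).2.symm
    have hα : ‖A z₀‖ = 1 / sphDeriv f z₀ := by
      simp only [hA_def, hA0, if_false]
      rw [norm_inv, hxval, one_div]
    have hval : ‖deriv (fun w => (f w)⁻¹) z₀‖^2
        * ‖(fun z => (deriv (fun w => (f w)⁻¹) z)⁻¹) z₀‖ = sphDeriv f z₀ := by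
      simp only
      rw [norm_inv, hxval]
      have hdpos₀ : 0 < ‖deriv (fun w => (f w)⁻¹) z₀‖ := norm_pos_iff.mpr hd₀
      rw [sq, mul_assoc, mul_inv_cancel₀ (ne_of_gt hdpos₀), mul_one]
    have hcore := core_s7 c hc z₀ hz₀ A B (fun w => (f w)⁻¹)
      (fun z => (deriv (fun w => (f w)⁻¹) z)⁻¹) (sphDeriv f z₀) hx0
      hAa hBa hbd hg0a hu hg00 hBloc hα hval
    exact final_algebra c (sphDeriv f z₀) (1 - ‖z₀‖^2) hc hx0 hs hcore
end

section
/- Let z₀ ∈ 𝔻 with z₀ ≠ 0, and let w : 𝔻 → 𝔻 be a holomorphic function (mapping the open unit disk into itself) such that w(z₀) = 0 and w''(z₀) = 0. Then |w'(z₀)| ≤ (√(4 + |z₀|²) − |z₀|)/(2(1 − |z₀|²)). -/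
open Complex Metric ComplexConjugate

noncomputable def moeb (a z : ℂ) : ℂ := (z + a) / (1 + conj a * z)

lemma normSq_lt_one (a : ℂ) (ha : ‖a‖ < 1) : normSq a < 1 := by
  rw [← Complex.sq_norm]; nlinarith [norm_nonneg a]

lemma moeb_den_ne (a z : ℂ) (ha : ‖a‖ < 1) (hz : ‖z‖ < 1) :
    1 + conj a * z ≠ 0 := by
  intro h
  have h1 : ‖conj a * z‖ < 1 := by
    rw [norm_mul, Complex.norm_conj]
    nlinarith [norm_nonneg a, norm_nonneg z]
  have : conj a * z = -1 := by linear_combination h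
  rw [this] at h1; simp at h1

lemma moeb_maps (a : ℂ) (ha : ‖a‖ < 1) :
    Set.MapsTo (moeb a) (ball (0:ℂ) 1) (ball (0:ℂ) 1) := by
  intro z hz
  rw [mem_ball_zero_iff] at hz ⊢
  have hden := moeb_den_ne a z ha hz
  have key : normSq (1 + conj a * z) - normSq (z + a) = (1 - normSq a) * (1 - normSq z) := by
    simp [normSq_apply]; ring
  have h1 := normSq_lt_one a ha
  have h2 := normSq_lt_one z hz
  have hlt : normSq (z + a) < normSq (1 + conj a * z) := by nlinarith
  rw [moeb, norm_div, div_lt_one (norm_pos_iff.mpr hden)]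
  rw [Complex.norm_def, Complex.norm_def]
  exact Real.sqrt_lt_sqrt (normSq_nonneg _) hlt

lemma moeb_hasDerivAt (a z : ℂ) (h : 1 + conj a * z ≠ 0) :
    HasDerivAt (moeb a) ((1 - a * conj a) / (1 + conj a * z) ^ 2) z := by
  have h1 : HasDerivAt (fun z : ℂ => z + a) 1 z := (hasDerivAt_id z).add_const a
  have h2 : HasDerivAt (fun z : ℂ => 1 + conj a * z) (conj a) z := by
    simpa using ((hasDerivAt_id z).const_mul (conj a)).const_add 1
  have := h1.fun_div h2 h
  refine this.congr_deriv ?_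
  field_simp
  ring

lemma moeb_diffOn (a : ℂ) (ha : ‖a‖ < 1) :
    DifferentiableOn ℂ (moeb a) (ball (0:ℂ) 1) := by
  intro z hz
  rw [mem_ball_zero_iff] at hz
  exact ((moeb_hasDerivAt a z (moeb_den_ne a z ha hz)).differentiableAt).differentiableWithinAt

lemma moeb_zero (a : ℂ) : moeb a 0 = a := by simp [moeb]

lemma moeb_deriv_eventually (a : ℂ) (ha : ‖a‖ < 1) :
    deriv (moeb a) =ᶠ[nhds (0:ℂ)] fun z => (1 - a * conj a) / (1 + conj a * z) ^ 2 := by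
  filter_upwards [isOpen_ball.mem_nhds (mem_ball_self one_pos : (0:ℂ) ∈ ball 0 1)] with z hz
  rw [mem_ball_zero_iff] at hz
  exact (moeb_hasDerivAt a z (moeb_den_ne a z ha hz)).deriv

lemma moebF_hasDerivAt (a : ℂ) :
    HasDerivAt (fun z => (1 - a * conj a) / (1 + conj a * z) ^ 2)
      (-2 * conj a * (1 - a * conj a)) 0 := by
  have h2 : HasDerivAt (fun z : ℂ => (1 + conj a * z) ^ 2) (2 * conj a) 0 := by
    have hbase : HasDerivAt (fun z : ℂ => 1 + conj a * z) (conj a) 0 := by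
      simpa using ((hasDerivAt_id (0:ℂ)).const_mul (conj a)).const_add 1
    have := hbase.fun_pow 2
    simpa using this
  have h1 : HasDerivAt (fun _ : ℂ => (1 - a * conj a)) 0 0 := hasDerivAt_const _ _
  have hden : ((1 : ℂ) + conj a * 0) ^ 2 ≠ 0 := by simp
  have := h1.fun_div h2 (by simpa using hden)
  refine this.congr_deriv ?_
  field_simp
  ring

lemma moeb_deriv2 (a : ℂ) (ha : ‖a‖ < 1) :
    deriv (deriv (moeb a)) 0 = -2 * conj a * (1 - a * conj a) := by
  rw [(moeb_deriv_eventually a ha).deriv_eq]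
  exact (moebF_hasDerivAt a).deriv

lemma moeb_deriv_zero (a : ℂ) (ha : ‖a‖ < 1) :
    deriv (moeb a) 0 = 1 - a * conj a := by
  have := (moeb_hasDerivAt a 0 (by simp)).deriv
  simpa using this

lemma deriv_dslope_zero (f : ℂ → ℂ) (hf : AnalyticAt ℂ f 0) :
    deriv (dslope f 0) 0 = deriv (deriv f) 0 / 2 := by
  obtain ⟨p, hp⟩ := hf
  have h1 : deriv (dslope f 0) 0 = p.coeff 2 := by
    rw [hp.has_fpower_series_dslope_fslope.deriv]
    exact p.coeff_fslope
  obtain ⟨rr, hrr⟩ := hp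
  have h2 := hrr.factorial_smul (1 : ℂ) 2
  have h3 : iteratedDeriv 2 f 0 = deriv (deriv f) 0 := by
    rw [iteratedDeriv_succ, iteratedDeriv_one]
  rw [← iteratedDeriv_eq_iteratedFDeriv, h3] at h2
  have h4 : (2 : ℂ) * p.coeff 2 = deriv (deriv f) 0 := by
    have h5 : (Nat.factorial 2 : ℕ) • p.coeff 2 = deriv (deriv f) 0 := h2
    rw [nsmul_eq_mul] at h5
    norm_num at h5
    exact h5
  rw [h1, ← h4]
  ring

/-- A Schwarz–Pick type lemma: if `w : 𝔻 → 𝔻` is holomorphic with `w(z₀) = 0` and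
`w''(z₀) = 0` for some `z₀ ≠ 0`, then `|w'(z₀)| ≤ (√(4+|z₀|²) - |z₀|)/(2(1-|z₀|²))`. -/
theorem schwarz_pick_refined (z₀ : ℂ) (hz₀ : z₀ ∈ ball (0 : ℂ) 1) (hz₀0 : z₀ ≠ 0)
    (w : ℂ → ℂ) (hw : DifferentiableOn ℂ w (ball (0 : ℂ) 1))
    (hmaps : Set.MapsTo w (ball (0 : ℂ) 1) (ball (0 : ℂ) 1))
    (hw0 : w z₀ = 0) (hw'' : deriv (deriv w) z₀ = 0) :
    ‖deriv w z₀‖ ≤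
      (Real.sqrt (4 + ‖z₀‖ ^ 2) - ‖z₀‖) /
        (2 * (1 - ‖z₀‖ ^ 2)) := by
  have hz₀abs : ‖z₀‖ < 1 := by
    simpa [mem_ball_zero_iff] using hz₀
  set R := ‖z₀‖ with hRdef
  have hR0 : 0 < R := norm_pos_iff.mpr hz₀0
  have hR2 : 0 < 1 - R ^ 2 := by nlinarith
  have hs0 : (0:ℝ) ≤ 4 + R ^ 2 := by positivity
  have hs := Real.sq_sqrt hs0
  have hsnn := Real.sqrt_nonneg (4 + R ^ 2)
  by_cases hd : deriv w z₀ = 0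
  · rw [hd]
    simp only [norm_zero]
    apply div_nonneg _ (by positivity)
    nlinarith
  set A := ‖deriv w z₀‖ with hAdef
  have hA0 : 0 < A := norm_pos_iff.mpr hd
  set φ := moeb z₀ with hφdef
  set f := w ∘ φ with hfdef
  have hφmaps := moeb_maps z₀ hz₀abs
  have hφdiff := moeb_diffOn z₀ hz₀abs
  have hfdiff : DifferentiableOn ℂ f (ball 0 1) := hw.comp hφdiff hφmaps
  have hφ0 : φ 0 = z₀ := moeb_zero z₀
  have hf0 : f 0 = 0 := by simp [hfdef, Function.comp, hφ0, hw0]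
  have hfmaps : Set.MapsTo f (ball 0 1) (ball (f 0) 1) := by
    rw [hf0]; exact hmaps.comp hφmaps
  have honeminus : (1 : ℂ) - z₀ * conj z₀ = ((1 - R ^ 2 : ℝ) : ℂ) := by
    rw [Complex.mul_conj, ← Complex.sq_norm]
    push_cast
    ring
  have homne : (1 : ℂ) - z₀ * conj z₀ ≠ 0 := by
    rw [honeminus]
    exact_mod_cast ne_of_gt hR2
  have hwan : AnalyticOnNhd ℂ w (ball 0 1) := hw.analyticOnNhd isOpen_ball
  have hw'diff : DifferentiableAt ℂ (deriv w) z₀ := (hwan.deriv z₀ hz₀).differentiableAt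
  set P : ℂ → ℂ := fun z => deriv w (φ z) * ((1 - z₀ * conj z₀) / (1 + conj z₀ * z) ^ 2) with hPdef
  have hev : deriv f =ᶠ[nhds 0] P := by
    filter_upwards [isOpen_ball.mem_nhds (mem_ball_self one_pos)] with z hz
    have hzabs : ‖z‖ < 1 := by
      simpa [mem_ball_zero_iff] using hz
    have hφz := moeb_hasDerivAt z₀ z (moeb_den_ne z₀ z hz₀abs hzabs)
    have hwz : HasDerivAt w (deriv w (φ z)) (φ z) :=
      (hw.differentiableAt (isOpen_ball.mem_nhds (hφmaps hz))).hasDerivAt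
    exact (hwz.comp z hφz).deriv
  have hf'0 : deriv f 0 = deriv w z₀ * (1 - z₀ * conj z₀) := by
    have hφz := moeb_hasDerivAt z₀ 0 (by simp)
    have hwz : HasDerivAt w (deriv w z₀) z₀ :=
      (hw.differentiableAt (isOpen_ball.mem_nhds hz₀)).hasDerivAt
    rw [← hφ0] at hwz
    have := (hwz.comp 0 hφz).deriv
    simpa [hφ0] using this
  have hPderiv : HasDerivAt P (deriv w z₀ * (-2 * conj z₀ * (1 - z₀ * conj z₀))) 0 := by
    have h1 : HasDerivAt (deriv w) (deriv (deriv w) z₀) z₀ := hw'diff.hasDerivAt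
    rw [hw'', ← hφ0] at h1
    have hG : HasDerivAt (fun z => deriv w (φ z)) 0 0 := by
      have := h1.comp 0 (moeb_hasDerivAt z₀ 0 (by simp))
      simpa [Function.comp_def] using this
    have hH := moebF_hasDerivAt z₀
    have := hG.mul hH
    rw [hPdef]
    refine this.congr_deriv ?_
    simp [hφ0]
  have hf''0 : deriv (deriv f) 0 = deriv w z₀ * (-2 * conj z₀ * (1 - z₀ * conj z₀)) := by
    rw [hev.deriv_eq]; exact hPderiv.deriv
  have hf''ne : deriv (deriv f) 0 ≠ 0 := by
    rw [hf''0]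
    refine mul_ne_zero hd (mul_ne_zero (mul_ne_zero (by norm_num) ?_) homne)
    simpa using hz₀0
  set g := dslope f 0 with hgdef
  have hgdiff : DifferentiableOn ℂ g (ball 0 1) :=
    (differentiableOn_dslope (isOpen_ball.mem_nhds (mem_ball_self one_pos))).mpr hfdiff
  have hglt : ∀ z ∈ ball (0:ℂ) 1, ‖g z‖ < 1 := by
    intro z hz
    have hle : ‖g z‖ ≤ 1 := by
      have := Complex.norm_dslope_le_div_of_mapsTo_ball hfdiff (hfmaps.mono_right ball_subset_closedBall) hz
      simpa using this
    rcases lt_or_eq_of_le hle with h | h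
    · exact h
    · exfalso
      have h_eq : ‖dslope f 0 z‖ = 1 / 1 := by simpa using h
      have haff := Complex.affine_of_mapsTo_ball_of_exists_norm_dslope_eq_div hfdiff (hfmaps.mono_right ball_subset_closedBall) hz h_eq
      set C := dslope f 0 z with hC
      have hderivf : ∀ u ∈ ball (0:ℂ) 1, deriv f u = C := by
        intro u hu
        have hev2 : f =ᶠ[nhds u] fun y => f 0 + (y - 0) • C :=
          Filter.eventuallyEq_of_mem (isOpen_ball.mem_nhds hu) haff
        rw [hev2.deriv_eq]
        have hC' : HasDerivAt (fun y : ℂ => f 0 + (y - 0) • C) C u := by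
          simpa [smul_eq_mul] using (((hasDerivAt_id u).sub_const 0).mul_const C).const_add (f 0)
        exact hC'.deriv
      have hev3 : deriv f =ᶠ[nhds 0] fun _ => C :=
        Filter.eventuallyEq_of_mem (isOpen_ball.mem_nhds (mem_ball_self one_pos)) hderivf
      have : deriv (deriv f) 0 = 0 := by rw [hev3.deriv_eq]; simp
      exact hf''ne this
  have hgmaps : Set.MapsTo g (ball 0 1) (ball (0:ℂ) 1) := fun z hz =>
    mem_ball_zero_iff.2 (hglt z hz)
  set c := deriv w z₀ * (1 - z₀ * conj z₀) with hcdef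
  have hg0 : g 0 = c := by rw [hgdef, dslope_same, hf'0]
  have hcabs : ‖c‖ < 1 := by
    have := hglt 0 (mem_ball_self one_pos)
    rwa [hg0] at this
  have hfan : AnalyticAt ℂ f 0 := hfdiff.analyticAt (isOpen_ball.mem_nhds (mem_ball_self one_pos))
  have hg'0 : deriv g 0 = deriv w z₀ * (-2 * conj z₀ * (1 - z₀ * conj z₀)) / 2 := by
    rw [hgdef, deriv_dslope_zero f hfan, hf''0]
  have hcabs' : ‖-c‖ < 1 := by simpa using hcabs
  set ψ := moeb (-c) with hψdef
  set h := ψ ∘ g with hhdef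
  have hh0 : h 0 = 0 := by
    simp [hhdef, Function.comp, hg0, hψdef, moeb]
  have hhdiff : DifferentiableOn ℂ h (ball 0 1) :=
    (moeb_diffOn (-c) hcabs').comp hgdiff hgmaps
  have hhmaps : Set.MapsTo h (ball 0 1) (ball (h 0) 1) := by
    rw [hh0]; exact (moeb_maps (-c) hcabs').comp hgmaps
  have hschwarz : ‖deriv h 0‖ ≤ 1 := by
    have := Complex.norm_deriv_le_div_of_mapsTo_ball hhdiff (hhmaps.mono_right ball_subset_closedBall) one_pos
    simpa using this
  have hgd0 : HasDerivAt g (deriv g 0) 0 :=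
    (hgdiff.differentiableAt (isOpen_ball.mem_nhds (mem_ball_self one_pos))).hasDerivAt
  have hψd : HasDerivAt ψ ((1 - (-c) * conj (-c)) / (1 + conj (-c) * c) ^ 2) (g 0) := by
    rw [hg0]
    exact moeb_hasDerivAt (-c) c (moeb_den_ne (-c) c hcabs' hcabs)
  have hh' : deriv h 0 = ((1 - (-c) * conj (-c)) / (1 + conj (-c) * c) ^ 2) * deriv g 0 :=
    (hψd.comp 0 hgd0).deriv
  set t := ‖c‖ with htdef
  have ht0 : 0 ≤ t := norm_nonneg c
  have ht2 : 0 < 1 - t ^ 2 := by nlinarith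
  have hcc : (1:ℂ) - (-c) * conj (-c) = ((1 - t ^ 2 : ℝ) : ℂ) := by
    rw [map_neg, neg_mul_neg, Complex.mul_conj, ← Complex.sq_norm]
    push_cast; ring
  have hcc' : (1:ℂ) + conj (-c) * c = ((1 - t ^ 2 : ℝ) : ℂ) := by
    rw [map_neg, neg_mul, mul_comm ((starRingEnd ℂ) c) c, Complex.mul_conj, ← Complex.sq_norm]
    push_cast; ring
  have habs_h : ‖deriv h 0‖ = ‖deriv g 0‖ / (1 - t ^ 2) := by
    rw [hh', hcc, hcc', norm_mul, norm_div, norm_pow]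
    simp only [Complex.norm_real, Real.norm_eq_abs, abs_of_pos ht2]
    field_simp
  have hdgle : ‖deriv g 0‖ ≤ 1 - t ^ 2 := by
    rw [habs_h, div_le_one ht2] at hschwarz
    exact hschwarz
  have hdg : ‖deriv g 0‖ = A * R * (1 - R ^ 2) := by
    have hg'0' : deriv g 0 = -(deriv w z₀ * conj z₀ * ((1 - R ^ 2 : ℝ) : ℂ)) := by
      rw [hg'0, honeminus]; ring
    rw [hg'0']
    simp only [norm_neg, norm_mul, Complex.norm_conj, Complex.norm_real, Real.norm_eq_abs]
    rw [abs_of_pos hR2]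
  have htc : t = A * (1 - R ^ 2) := by
    rw [htdef, hcdef, honeminus, norm_mul, Complex.norm_real, Real.norm_eq_abs, abs_of_pos hR2]
  rw [hdg, htc] at hdgle
  rw [le_div_iff₀ (by positivity : (0:ℝ) < 2 * (1 - R ^ 2))]
  nlinarith [hdgle, hs, hsnn, mul_nonneg hA0.le hR2.le, sq_nonneg (A * (1 - R ^ 2))]
end

section
/- Let z₀ ∈ 𝔻 with z₀ ≠ 0, and let w : 𝔻 → 𝔻 be a holomorphic function such that w(z₀) = 0, w''(z₀) = 0, and |w'(z₀)| = (√(4 + |z₀|²) − |z₀|)/(2(1 − |z₀|²)). Then w is a Blaschke product of degree 2: there exist λ ∈ ℂ with |λ| = 1 and p ∈ 𝔻 such that w(z) = λ · ((z − z₀)/(1 − z̄₀z)) · ((z − p)/(1 − p̄z)) for all z ∈ 𝔻. -/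
open Complex Metric ComplexConjugate

lemma normSq_mobius_identity (u v : ℂ) :
    normSq (1 - conj v * u) = normSq (u - v) + (1 - normSq u) * (1 - normSq v) := by
  have h : ((normSq (1 - conj v * u) : ℂ)) =
      (normSq (u - v) : ℂ) + (1 - (normSq u : ℂ)) * (1 - (normSq v : ℂ)) := by
    rw [← mul_conj, ← mul_conj, ← mul_conj, ← mul_conj]
    simp only [map_sub, map_mul, map_one, conj_conj]
    ring
  exact_mod_cast h

lemma den_ne_zero {u v : ℂ} (hu : ‖u‖ < 1) (hv : ‖v‖ ≤ 1) :
    1 - conj v * u ≠ 0 := by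
  intro h
  have h1 : conj v * u = 1 := by linear_combination -h
  have := congrArg (‖·‖) h1
  rw [norm_mul, norm_one, Complex.norm_conj] at this
  nlinarith [norm_nonneg v, norm_nonneg u]

lemma mobius_abs_lt_one {u v : ℂ} (hu : ‖u‖ < 1) (hv : ‖v‖ < 1) :
    ‖(u - v) / (1 - conj v * u)‖ < 1 := by
  rw [norm_div, div_lt_one (by
    have := den_ne_zero hu hv.le
    exact (norm_pos_iff.mpr this))]
  have key := normSq_mobius_identity u v
  have h1 : normSq u < 1 := by rw [← Complex.sq_norm] at *; nlinarith [norm_nonneg u]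
  have h2 : normSq v < 1 := by rw [← Complex.sq_norm]; nlinarith [norm_nonneg v]
  have : normSq (u - v) < normSq (1 - conj v * u) := by nlinarith [normSq_nonneg (u - v)]
  rw [Complex.norm_def, Complex.norm_def]
  exact Real.sqrt_lt_sqrt (normSq_nonneg _) this

lemma mobius_hasDerivAt {v : ℂ} (u : ℂ) (h : 1 - conj v * u ≠ 0) :
    HasDerivAt (fun t => (t - v) / (1 - conj v * t))
      ((1 - normSq v) / (1 - conj v * u) ^ 2) u := by
  have h1 : HasDerivAt (fun t : ℂ => t - v) 1 u := (hasDerivAt_id u).sub_const v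
  have h2 : HasDerivAt (fun t : ℂ => 1 - conj v * t) (-conj v) u := by
    simpa using ((hasDerivAt_id u).const_mul (conj v)).const_sub 1
  have := h1.div h2 h
  refine this.congr_deriv ?_
  rw [div_eq_div_iff (pow_ne_zero 2 h) (pow_ne_zero 2 h)]
  linear_combination -((1 - conj v * u)^2 * (mul_conj v))

lemma deriv_deriv_eq_two_mul_deriv_dslope {f : ℂ → ℂ} {c : ℂ} (hf : AnalyticAt ℂ f c) :
    deriv (deriv f) c = 2 * deriv (dslope f c) c := by
  obtain ⟨p, hp⟩ := hf
  have h1 : deriv (dslope f c) c = p.coeff 2 := by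
    rw [hp.has_fpower_series_dslope_fslope.deriv]
    exact FormalMultilinearSeries.coeff_fslope
  obtain ⟨r, hr⟩ := hp
  have h2 := hr.factorial_smul (1 : ℂ) 2
  have h3 : iteratedFDeriv ℂ 2 f c (fun _ => (1 : ℂ)) = deriv (deriv f) c := by
    rw [← iteratedDeriv_eq_iteratedFDeriv]
    rw [show (2 : ℕ) = 1 + 1 from rfl, iteratedDeriv_succ, iteratedDeriv_one]
  have h4 : (p 2 fun _ => (1 : ℂ)) = p.coeff 2 := rfl
  rw [h3, h4] at h2
  rw [h1, ← h2]
  simp [Nat.factorial]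

set_option maxHeartbeats 2000000 in
/-- Equality case of the refined Schwarz–Pick lemma: an extremal `w` is a Blaschke
product of degree 2. -/
theorem schwarz_pick_refined_eq (z₀ : ℂ) (hz₀ : z₀ ∈ ball (0 : ℂ) 1) (hz₀0 : z₀ ≠ 0)
    (w : ℂ → ℂ) (hw : DifferentiableOn ℂ w (ball (0 : ℂ) 1))
    (hmaps : Set.MapsTo w (ball (0 : ℂ) 1) (ball (0 : ℂ) 1))
    (hw0 : w z₀ = 0) (hw'' : deriv (deriv w) z₀ = 0)
    (heq : ‖deriv w z₀‖ =
      (Real.sqrt (4 + ‖z₀‖ ^ 2) - ‖z₀‖) /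
        (2 * (1 - ‖z₀‖ ^ 2))) :
    ∃ lam p : ℂ, ‖lam‖ = 1 ∧ p ∈ ball (0 : ℂ) 1 ∧
      ∀ z ∈ ball (0 : ℂ) 1,
        w z = lam * ((z - z₀) / (1 - conj z₀ * z)) * ((z - p) / (1 - conj p * z)) := by
  set x : ℝ := ‖z₀‖ with hxdef
  have hx0 : 0 < x := norm_pos_iff.mpr hz₀0
  have hx1 : x < 1 := by rw [hxdef]; simpa [mem_ball_zero_iff] using hz₀
  -- the Möbius map ψ with ψ 0 = z₀
  set ψ : ℂ → ℂ := fun t => (t - -z₀) / (1 - conj (-z₀) * t) with hψdef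
  have habs_neg : ‖-z₀‖ = x := by simp [hxdef]
  have hψmem : ∀ t ∈ ball (0 : ℂ) 1, ψ t ∈ ball (0 : ℂ) 1 := by
    intro t ht
    rw [mem_ball_zero_iff] at ht ⊢
    exact mobius_abs_lt_one ht (by simpa using hx1)
  have hψ0 : ψ 0 = z₀ := by simp [hψdef]
  set ψd : ℂ → ℂ := fun t => (1 - (normSq z₀ : ℂ)) / (1 - conj (-z₀) * t) ^ 2 with hψd_def
  have hψD : ∀ t ∈ ball (0 : ℂ) 1, HasDerivAt ψ (ψd t) t := by
    intro t ht
    rw [mem_ball_zero_iff] at ht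
    have := mobius_hasDerivAt (v := -z₀) t (den_ne_zero ht (by simpa using hx1.le))
    simpa only [hψd_def, normSq_neg] using this
  -- W = w ∘ ψ
  set W : ℂ → ℂ := fun t => w (ψ t) with hWdef
  have hψdiff : DifferentiableOn ℂ ψ (ball (0 : ℂ) 1) := fun t ht =>
    (hψD t ht).differentiableAt.differentiableWithinAt
  have hWd : DifferentiableOn ℂ W (ball (0 : ℂ) 1) := hw.comp hψdiff hψmem
  have hW0 : W 0 = 0 := by simp [hWdef, hψ0, hw0]
  have hWmaps : Set.MapsTo W (ball (0 : ℂ) 1) (ball (W 0) 1) := by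
    rw [hW0]
    exact fun t ht => hmaps (hψmem t ht)
  -- g = dslope W 0
  set g : ℂ → ℂ := dslope W 0 with hgdef
  have hgle : ∀ z ∈ ball (0 : ℂ) 1, ‖g z‖ ≤ 1 := by
    intro z hz
    have := Complex.norm_dslope_le_div_of_mapsTo_ball hWd (hWmaps.mono_right ball_subset_closedBall) hz
    simpa using this
  have hgd : DifferentiableOn ℂ g (ball (0 : ℂ) 1) :=
    (differentiableOn_dslope (isOpen_ball.mem_nhds (mem_ball_self one_pos))).mpr hWd
  -- value of g 0
  have hwA : AnalyticOnNhd ℂ w (ball (0 : ℂ) 1) := hw.analyticOnNhd isOpen_ball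
  have hwdA : AnalyticOnNhd ℂ (deriv w) (ball (0 : ℂ) 1) := hwA.deriv
  have hWD : ∀ t ∈ ball (0 : ℂ) 1, HasDerivAt W (deriv w (ψ t) * ψd t) t := by
    intro t ht
    have hw1 : HasDerivAt w (deriv w (ψ t)) (ψ t) :=
      ((hw.differentiableAt (isOpen_ball.mem_nhds (hψmem t ht)))).hasDerivAt
    exact HasDerivAt.comp t hw1 (hψD t ht)
  have hψd0 : ψd 0 = 1 - (normSq z₀ : ℂ) := by simp [hψd_def]
  set ν : ℂ := 1 - (normSq z₀ : ℂ) with hνdef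
  have hg0 : g 0 = deriv w z₀ * ν := by
    rw [hgdef, dslope_same]
    rw [(hWD 0 (mem_ball_self one_pos)).deriv, hψ0, hψd0]
  have hnsqx : normSq z₀ = x ^ 2 := by rw [hxdef]; exact (Complex.sq_norm z₀).symm
  have habs_ν : ‖ν‖ = 1 - x ^ 2 := by
    have hν2 : ν = ((1 - x ^ 2 : ℝ) : ℂ) := by
      rw [hνdef, hnsqx]
      push_cast
      ring
    rw [hν2, Complex.norm_real, Real.norm_eq_abs, abs_of_pos (by nlinarith)]
  set a : ℝ := ‖g 0‖ with hadef
  have ha : a = (Real.sqrt (4 + x ^ 2) - x) / 2 := by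
    rw [hadef, hg0, norm_mul, heq, habs_ν]
    have h1 : (1 : ℝ) - x ^ 2 ≠ 0 := by nlinarith
    field_simp
  have hs2 : Real.sqrt (4 + x ^ 2) ^ 2 = 4 + x ^ 2 := Real.sq_sqrt (by positivity)
  have hs0 : 0 ≤ Real.sqrt (4 + x ^ 2) := Real.sqrt_nonneg _
  have hax : a * x = 1 - a ^ 2 := by rw [ha]; nlinarith
  have ha0 : 0 < a := by rw [ha]; nlinarith
  have ha1 : a < 1 := by nlinarith
  -- second derivative: deriv g 0 = - conj z₀ * g 0
  have hderiv_g : deriv g 0 = -conj z₀ * g 0 := by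
    have hWanalytic : AnalyticAt ℂ W 0 :=
      (hWd.analyticOnNhd isOpen_ball) 0 (mem_ball_self one_pos)
    have hkey := deriv_deriv_eq_two_mul_deriv_dslope hWanalytic
    have hEv : deriv W =ᶠ[nhds (0 : ℂ)] fun t => deriv w (ψ t) * ψd t :=
      Filter.eventuallyEq_of_mem (isOpen_ball.mem_nhds (mem_ball_self one_pos))
        (fun t ht => (hWD t ht).deriv)
    have hA1 : HasDerivAt (fun t => deriv w (ψ t)) (deriv (deriv w) z₀ * ψd 0) 0 := by
      have h1 : HasDerivAt (deriv w) (deriv (deriv w) z₀) (ψ 0) := by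
        rw [hψ0]
        exact ((hwdA z₀ hz₀).differentiableAt).hasDerivAt
      exact HasDerivAt.comp 0 h1 (hψD 0 (mem_ball_self one_pos))
    have hB1 : HasDerivAt ψd (2 * conj (-z₀) * ν) 0 := by
      have hDD : HasDerivAt (fun t : ℂ => 1 - conj (-z₀) * t) (-conj (-z₀)) 0 := by
        simpa using ((hasDerivAt_id (0 : ℂ)).const_mul (conj (-z₀))).const_sub 1
      have hD2 : HasDerivAt (fun t : ℂ => (1 - conj (-z₀) * t) ^ 2)
          ((2 : ℕ) * (1 - conj (-z₀) * 0) ^ (2 - 1) * -conj (-z₀)) 0 := hDD.pow 2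
      have hne : ((1 : ℂ) - conj (-z₀) * 0) ^ 2 ≠ 0 := by simp
      have hdiv := (hasDerivAt_const (0 : ℂ) ν).div hD2 hne
      rw [hψd_def]
      refine hdiv.congr_deriv ?_
      rw [show (2:ℕ) - 1 = 1 from rfl]
      ring
    have hprod := hA1.mul hB1
    have hd2W : deriv (deriv W) 0 = deriv w z₀ * (2 * conj (-z₀) * ν) := by
      rw [hEv.deriv_eq, show (fun t => deriv w (ψ t) * ψd t) = (fun t => deriv w (ψ t)) * ψd from rfl, hprod.deriv, hψ0, hw'']
      ring
    have h2g : 2 * deriv g 0 = deriv w z₀ * (2 * conj (-z₀) * ν) := by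
      rw [hgdef, ← hkey, hd2W]
    simp only [map_neg] at h2g
    rw [hg0]
    linear_combination h2g / 2
  have habs_dg : ‖deriv g 0‖ = x * a := by
    rw [hderiv_g, norm_mul, norm_neg, Complex.norm_conj, ← hadef]
  -- strict bound on g
  have hglt : ∀ z ∈ ball (0 : ℂ) 1, ‖g z‖ < 1 := by
    intro z1 hz1
    by_contra hcon
    push_neg at hcon
    have heq1 : g z1 = g z1 ∧ ‖g z1‖ = 1 :=
      ⟨rfl, le_antisymm (hgle z1 hz1) hcon⟩
    have hmax : IsMaxOn (norm ∘ g) (ball (0 : ℂ) 1) z1 := by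
      intro z hz
      simp only [Function.comp_apply, heq1.2]
      exact hgle z hz
    have hEqOn := Complex.eqOn_of_isPreconnected_of_isMaxOn_norm
      (convex_ball (0 : ℂ) 1).isPreconnected isOpen_ball hgd hz1 hmax
    have hconst : g =ᶠ[nhds (0 : ℂ)] fun _ => g z1 :=
      hEqOn.eventuallyEq_of_mem (isOpen_ball.mem_nhds (mem_ball_self one_pos))
    have hdg0 : deriv g 0 = 0 := by rw [hconst.deriv_eq]; exact deriv_const _ _
    rw [hdg0] at habs_dg
    simp only [norm_zero] at habs_dg
    nlinarith
  -- the Möbius transform G of g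
  set G : ℂ → ℂ := fun z => (g z - g 0) / (1 - conj (g 0) * g z) with hGdef
  have hG0 : G 0 = 0 := by
    simp only [hGdef, sub_self, zero_div]
  have hGd : DifferentiableOn ℂ G (ball (0 : ℂ) 1) := by
    intro z hz
    have hden : 1 - conj (g 0) * g z ≠ 0 := by
      refine den_ne_zero (hglt z hz) ?_
      rw [← hadef]; exact ha1.le
    exact ((hgd z hz).sub_const _).div
      ((differentiableWithinAt_const _).sub ((hgd z hz).const_mul _)) hden
  have hGmaps : Set.MapsTo G (ball (0 : ℂ) 1) (ball (G 0) 1) := by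
    rw [hG0]
    intro z hz
    rw [mem_ball_zero_iff]
    have hga : ‖g 0‖ < 1 := by rw [← hadef]; exact ha1
    exact mobius_abs_lt_one (hglt z hz) hga
  -- derivative of G at 0
  have hg_hasDeriv0 : HasDerivAt g (deriv g 0) 0 :=
    (hgd.differentiableAt (isOpen_ball.mem_nhds (mem_ball_self one_pos))).hasDerivAt
  have hGderiv : HasDerivAt G ((1 - (normSq (g 0) : ℂ)) / (1 - conj (g 0) * g 0) ^ 2 * deriv g 0) 0 := by
    have hden : 1 - conj (g 0) * g 0 ≠ 0 := by
      refine den_ne_zero (hglt 0 (mem_ball_self one_pos)) ?_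
      rw [← hadef]; exact ha1.le
    exact HasDerivAt.comp 0 (mobius_hasDerivAt (v := g 0) (g 0) hden) hg_hasDeriv0
  have hnsq_g0 : (normSq (g 0) : ℂ) = conj (g 0) * g 0 := by
    rw [← mul_conj]; ring
  have hnsq_g0R : normSq (g 0) = a ^ 2 := by
    rw [hadef]; exact (Complex.sq_norm _).symm
  have habs_dG : ‖deriv G 0‖ = 1 := by
    rw [hGderiv.deriv]
    have h2 : (1 - (normSq (g 0) : ℂ)) = ((1 - a ^ 2 : ℝ) : ℂ) := by
      rw [hnsq_g0R]; push_cast; ring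
    have h1 : 1 - conj (g 0) * g 0 = ((1 - a ^ 2 : ℝ) : ℂ) := by
      rw [← hnsq_g0]; exact h2
    rw [h1, h2, norm_mul, norm_div, habs_dg, norm_pow, Complex.norm_real, Real.norm_eq_abs]
    have h4 : |1 - a ^ 2| = a * x := by
      rw [abs_of_pos (by nlinarith)]; linarith [hax]
    rw [h4]
    have hax0 : a * x ≠ 0 := by positivity
    field_simp
  -- equality case of the Schwarz lemma
  have h_eq : ‖dslope G 0 0‖ = 1 / 1 := by
    rw [dslope_same]
    simpa using habs_dG
  have hEqG := Complex.affine_of_mapsTo_ball_of_exists_norm_dslope_eq_div hGd (hGmaps.mono_right ball_subset_closedBall)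
    (mem_ball_self one_pos) h_eq
  set lam0 : ℂ := deriv G 0 with hlam0def
  have hGz : ∀ z ∈ ball (0 : ℂ) 1, G z = z * lam0 := by
    intro z hz
    have := hEqG hz
    simpa [hG0, dslope_same, smul_eq_mul, hlam0def] using this
  have hlam1 : lam0 * conj lam0 = 1 := by
    rw [mul_conj]
    rw [← Complex.sq_norm, habs_dG]
    norm_num
  clear_value lam0
  clear_value x a ν ψ ψd W g G
  -- the final constants
  set A : ℂ := lam0 - g 0 * conj z₀ with hAdef
  set Cc : ℂ := lam0 * z₀ - g 0 with hCdef
  have hA0 : A ≠ 0 := by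
    intro h
    have h1 : lam0 = g 0 * conj z₀ := by linear_combination h
    have h2 := congrArg (‖·‖) h1
    rw [habs_dG, norm_mul, Complex.norm_conj, ← hadef, ← hxdef] at h2
    nlinarith only [h2, ha0, ha1, hx0, hx1]
  set p : ℂ := Cc / A with hpdef
  set lam : ℂ := A / (lam0 * conj A) with hlamdef
  have hlam0ne : lam0 ≠ 0 := by
    intro h
    rw [h] at habs_dG
    simp at habs_dG
  have hconjA : conj A ≠ 0 := by
    simpa using hA0
  have hlam_abs : ‖lam‖ = 1 := by
    rw [hlamdef, norm_div, norm_mul, Complex.norm_conj, habs_dG, one_mul, div_self]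
    exact norm_ne_zero_iff.mpr hA0
  -- |p| < 1
  have hAC : normSq A - normSq Cc = (1 - a ^ 2) * (1 - x ^ 2) := by
    have hc : ((normSq A : ℂ)) - (normSq Cc : ℂ) =
        (1 - (normSq (g 0) : ℂ)) * (1 - (normSq z₀ : ℂ)) := by
      rw [← mul_conj, ← mul_conj, ← mul_conj, ← mul_conj]
      simp only [hAdef, hCdef, map_sub, map_mul, conj_conj]
      linear_combination (1 - z₀ * conj z₀) * hlam1
    have hr : (normSq A : ℝ) - normSq Cc = (1 - normSq (g 0)) * (1 - normSq z₀) := by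
      exact_mod_cast hc
    rw [hr, hnsq_g0R, hnsqx]
  have hp_abs : ‖p‖ < 1 := by
    rw [hpdef, norm_div, div_lt_one (norm_pos_iff.mpr hA0)]
    rw [Complex.norm_def, Complex.norm_def]
    apply Real.sqrt_lt_sqrt (normSq_nonneg _)
    have hpos : 0 < (1 - a ^ 2) * (1 - x ^ 2) :=
      mul_pos (by nlinarith only [ha0, ha1]) (by nlinarith only [hx0, hx1])
    linarith [hAC]
  refine ⟨lam, p, hlam_abs, mem_ball_zero_iff.mpr (by simpa using hp_abs), ?_⟩
  -- final formula
  intro z hz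
  have hz₀abs : ‖z₀‖ < 1 := by rw [← hxdef]; exact hx1
  have hz1 : ‖z‖ < 1 := mem_ball_zero_iff.mp hz
  have hden0 : 1 - conj z₀ * z ≠ 0 := den_ne_zero hz1 hz₀abs.le
  have hden0' : 1 - z * conj z₀ ≠ 0 := by rw [mul_comm]; exact hden0
  set u : ℂ := (z - z₀) / (1 - conj z₀ * z) with hudef
  have hu_abs : ‖u‖ < 1 := mobius_abs_lt_one hz1 hz₀abs
  have hu_mem : u ∈ ball (0 : ℂ) 1 := mem_ball_zero_iff.mpr hu_abs
  have hψu : ψ u = z := by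
    rw [hψdef]
    have hden : 1 - conj (-z₀) * u ≠ 0 := den_ne_zero hu_abs (by simpa using hz₀abs.le)
    rw [div_eq_iff hden, hudef]
    field_simp
    simp only [map_neg]
    ring
  have hwz : w z = u * g u := by
    have h1 : (u - 0) • dslope W 0 u = W u - W 0 := sub_smul_dslope W 0 u
    rw [hW0, sub_zero, sub_zero, smul_eq_mul] at h1
    rw [← hgdef] at h1
    calc w z = W u := by rw [hWdef]; simp only [hψu]
    _ = u * g u := h1.symm
  -- g u from the Schwarz equality
  have hdenu : 1 - conj (g 0) * g u ≠ 0 := by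
    refine den_ne_zero (hglt u hu_mem) ?_
    rw [← hadef]; exact ha1.le
  have hdenu' : 1 - g u * conj (g 0) ≠ 0 := by rw [mul_comm]; exact hdenu
  have hgu : g u - g 0 = u * lam0 * (1 - conj (g 0) * g u) := by
    have h1 := hGz u hu_mem
    rw [hGdef] at h1
    field_simp [hdenu] at h1
    linear_combination h1
  have hgu2 : g u * (1 + conj (g 0) * lam0 * u) = g 0 + lam0 * u := by
    linear_combination hgu
  set D : ℂ := conj (g 0) * lam0 - conj z₀ with hDdef
  set Ee : ℂ := 1 - conj (g 0) * lam0 * z₀ with hEedef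
  have e1 : D * z + Ee = (1 - conj z₀ * z) * (1 + conj (g 0) * lam0 * u) := by
    rw [hudef]
    field_simp
    ring
  have e2 : A * z - Cc = (1 - conj z₀ * z) * (g 0 + lam0 * u) := by
    rw [hudef]
    field_simp
    ring
  have hmain : g u * (D * z + Ee) = A * z - Cc := by
    rw [e1, e2]
    linear_combination (1 - conj z₀ * z) * hgu2
  have hEe : Ee = lam0 * conj A := by
    simp only [hEedef, hAdef, map_sub, map_mul, conj_conj]
    linear_combination -(hlam1)
  have hD : D = -(lam0 * conj Cc) := by
    simp only [hDdef, hCdef, map_sub, map_mul, conj_conj]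
    linear_combination conj z₀ * hlam1
  have hden2 : 1 - conj p * z ≠ 0 := den_ne_zero hz1 hp_abs.le
  have e3 : D * z + Ee = lam0 * conj A * (1 - conj p * z) := by
    rw [hD, hEe, hpdef, map_div₀]
    field_simp
    ring
  have e4 : A * z - Cc = A * (z - p) := by
    rw [hpdef]
    field_simp
  have hgu3 : g u = A * (z - p) / (lam0 * conj A * (1 - conj p * z)) := by
    rw [eq_div_iff (mul_ne_zero (mul_ne_zero hlam0ne hconjA) hden2)]
    rw [← e3, ← e4]
    exact hmain
  rw [hwz, hgu3, hlamdef]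
  field_simp
end

section
/- Let c = 1/2 and let g : 𝔻 → ℂ be holomorphic with g(0) = 0, g'(0) > 0, and g'(z) ≠ 0 for all z ∈ 𝔻 (locally univalent). Then g satisfies the Beurling boundary condition lim_{|z|→1}(|g'(z)| − (1/2)(1 + |g(z)|²)) = 0 (i.e. for every ε > 0 there exists r ∈ (0,1) such that ||g'(z)| − (1/2)(1 + |g(z)|²)| < ε whenever r < |z| < 1) if and only if g(z) = z for all z ∈ 𝔻; that is, the identity is the only locally univalent solution. -/
open Complex Metric ComplexConjugate

/-- Maximum modulus principle on a closed subdisk of the unit disk. -/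
private lemma maxmod_aux {f : ℂ → ℂ} {s C : ℝ} (hs0 : 0 < s) (hs1 : s < 1)
    (hf : DifferentiableOn ℂ f (ball (0 : ℂ) 1))
    (hb : ∀ w : ℂ, ‖w‖ = s → ‖f w‖ ≤ C)
    {z : ℂ} (hz : ‖z‖ ≤ s) : ‖f z‖ ≤ C := by
  have hsub : closure (ball (0:ℂ) s) ⊆ ball (0:ℂ) 1 := by
    rw [closure_ball (0:ℂ) hs0.ne']
    exact closedBall_subset_ball hs1
  have hd : DiffContOnCl ℂ f (ball (0:ℂ) s) :=
    ⟨hf.mono (ball_subset_ball hs1.le), hf.continuousOn.mono hsub⟩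
  have hmem : z ∈ closure (ball (0:ℂ) s) := by
    rw [closure_ball (0:ℂ) hs0.ne', mem_closedBall_zero_iff]
    exact hz
  have key : ‖f z‖ ≤ C := by
    refine Complex.norm_le_of_forall_mem_frontier_norm_le isBounded_ball hd
      (fun w hw => ?_) hmem
    rw [frontier_ball (0:ℂ) hs0.ne'] at hw
    exact hb w (by rwa [mem_sphere_zero_iff_norm] at hw)
  exact key

set_option maxHeartbeats 1600000 in
/-- For `c = 1/2`, the identity is the only locally univalent solution `g ∈ ℋ₀(𝔻)` of
the Beurling boundary value problem `lim_{|z|→1} (|g'(z)| - (1/2)(1+|g(z)|²)) = 0`. -/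
theorem beurling_spherical_critical (g : ℂ → ℂ)
    (hg : DifferentiableOn ℂ g (ball (0 : ℂ) 1)) (hg0 : g 0 = 0)
    (hg'0re : 0 < (deriv g 0).re) (hg'0im : (deriv g 0).im = 0)
    (hg' : ∀ z ∈ ball (0 : ℂ) 1, deriv g z ≠ 0) :
    (∀ ε > (0 : ℝ), ∃ r ∈ Set.Ioo (0 : ℝ) 1, ∀ z : ℂ,
        r < ‖z‖ → ‖z‖ < 1 →
          |‖deriv g z‖ - (1 / 2) * (1 + ‖g z‖ ^ 2)| < ε) ↔
      (∀ z ∈ ball (0 : ℂ) 1, g z = z) := by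
  have hg0mem : (0:ℂ) ∈ ball (0:ℂ) 1 := mem_ball_self one_pos
  constructor
  · intro H
    have hA : AnalyticOnNhd ℂ g (ball (0:ℂ) 1) := hg.analyticOnNhd isOpen_ball
    have hA' : AnalyticOnNhd ℂ (deriv g) (ball (0:ℂ) 1) := hA.deriv
    set Cf : ℂ → ℂ := fun w => g w / deriv g w with hCf
    have hCdiff : DifferentiableOn ℂ Cf (ball (0:ℂ) 1) :=
      hg.div hA'.differentiableOn hg'
    have hC0 : Cf 0 = 0 := by
      simp only [hCf, hg0, zero_div]
    -- Step 1 : |Cf| ≤ 1 on the unit ball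
    have hCle : ∀ z : ℂ, ‖z‖ < 1 → ‖Cf z‖ ≤ 1 := by
      intro z hz
      have key : ∀ δ : ℝ, 0 < δ → ‖Cf z‖ ≤ 1 + δ := by
        intro δ hδ
        set ε := min (δ/4) (1/4) with hε
        have hε0 : 0 < ε := lt_min (by linarith) (by norm_num)
        have hε4 : ε ≤ 1/4 := min_le_right _ _
        have hεδ : ε ≤ δ/4 := min_le_left _ _
        obtain ⟨r, hrI, hP⟩ := H ε hε0
        set s := (max r (‖z‖) + 1)/2 with hs
        have hm1 : max r (‖z‖) < 1 := max_lt hrI.2 hz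
        have hrs : r < s := by
          have := le_max_left r (‖z‖)
          simp only [hs]; linarith
        have hzs : ‖z‖ ≤ s := by
          have := le_max_right r (‖z‖)
          simp only [hs]; linarith
        have hs0 : 0 < s := lt_of_lt_of_le hrI.1 (le_of_lt hrs)
        have hs1 : s < 1 := by simp only [hs]; linarith
        refine maxmod_aux hs0 hs1 hCdiff (fun w hw => ?_) hzs
        have hbd := hP w (by rw [hw]; exact hrs) (by rw [hw]; exact hs1)
        set t := ‖g w‖ with htdef
        set D := ‖deriv g w‖ with hDdef
        have ht0 : 0 ≤ t := norm_nonneg _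
        have h1 := (abs_lt.mp hbd).1
        have hD : 1/2 * (1 + t^2) - ε < D := by linarith
        have hD4 : 1/4 ≤ D := by nlinarith [sq_nonneg t]
        have hDpos : 0 < D := by linarith
        have habsC : ‖Cf w‖ = t / D := by
          simp only [hCf, norm_div, htdef, hDdef]
        rw [habsC, div_le_iff₀ hDpos]
        nlinarith [sq_nonneg (t - 1), mul_nonneg hδ.le (by linarith : (0:ℝ) ≤ D - 1/4)]
      by_contra hcon
      push_neg at hcon
      have := key ((‖Cf z‖ - 1)/2) (by linarith)
      linarith
    -- Step 2 : the dslope of Cf at 0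
    have hdsl : DifferentiableOn ℂ (dslope Cf 0) (ball (0:ℂ) 1) :=
      (differentiableOn_dslope (isOpen_ball.mem_nhds hg0mem)).mpr hCdiff
    have hdle : ∀ z ∈ ball (0:ℂ) 1, ‖dslope Cf 0 z‖ ≤ 1 := by
      intro z hz
      rw [mem_ball_zero_iff] at hz
      have key : ∀ s : ℝ, ‖z‖ < s → s < 1 →
          ‖dslope Cf 0 z‖ ≤ 1 / s := by
        intro s h1 h2
        have hs0 : 0 < s := lt_of_le_of_lt (norm_nonneg z) h1
        refine maxmod_aux hs0 h2 hdsl (fun w hw => ?_) h1.le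
        have hw0 : w ≠ 0 := by
          intro h; rw [h] at hw; simp at hw; exact absurd hw.symm hs0.ne'
        rw [dslope_of_ne _ hw0, slope_def_field, hC0, sub_zero, sub_zero, norm_div, hw]
        have hCw := hCle w (by rw [hw]; exact h2)
        gcongr
      by_contra hcon
      push_neg at hcon
      set A := ‖dslope Cf 0 z‖ with hA2
      have hA1 : 1 < A := hcon
      have hApos : (0:ℝ) < A := by linarith
      have hiA : 1/A < 1 := by rw [div_lt_one hApos]; exact hA1
      set s := (max (‖z‖) (1/A) + 1)/2 with hsd
      have hmax1 : max (‖z‖) (1/A) < 1 := max_lt hz hiA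
      have h1 : ‖z‖ < s := by
        have := le_max_left (‖z‖) (1/A)
        simp only [hsd]; linarith
      have h2 : s < 1 := by simp only [hsd]; linarith
      have h3 : 1/A < s := by
        have := le_max_right (‖z‖) (1/A)
        simp only [hsd]; linarith
      have hs0 : 0 < s := lt_trans (by positivity) h3
      have hk : A ≤ 1/s := key s h1 h2
      rw [le_div_iff₀ hs0] at hk
      rw [div_lt_iff₀ hApos] at h3
      nlinarith
    have hC'0 : deriv Cf 0 = 1 := by
      have hgd : DifferentiableAt ℂ g 0 := hg.differentiableAt (isOpen_ball.mem_nhds hg0mem)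
      have hg'd : DifferentiableAt ℂ (deriv g) 0 := (hA' 0 hg0mem).differentiableAt
      have h0 := hg' 0 hg0mem
      rw [hCf]
      rw [deriv_fun_div hgd hg'd h0, hg0]
      rw [zero_mul, sub_zero, ← pow_two]
      exact div_self (pow_ne_zero 2 h0)
    have hd0 : dslope Cf 0 0 = 1 := by rw [dslope_same]; exact hC'0
    have hmax : IsMaxOn (norm ∘ (dslope Cf 0)) (ball (0:ℂ) 1) 0 := by
      rw [isMaxOn_iff]
      intro w hw
      simp only [Function.comp_apply, hd0, norm_one]
      exact hdle w hw
    have heq := Complex.eqOn_of_isPreconnected_of_isMaxOn_norm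
      (convex_ball (0:ℂ) 1).isPreconnected isOpen_ball hdsl hg0mem hmax
    -- Step 3 : Cf z = z on the ball
    have hCid : ∀ z ∈ ball (0:ℂ) 1, Cf z = z := by
      intro z hz
      rcases eq_or_ne z 0 with rfl | hz0
      · exact hC0
      · have h1 : dslope Cf 0 z = 1 := by
          have h2 := heq hz
          rwa [Function.const_apply, hd0] at h2
        rw [dslope_of_ne _ hz0, slope_def_field, hC0, sub_zero, sub_zero,
          div_eq_one_iff_eq hz0] at h1
        exact h1
    have hgz : ∀ z ∈ ball (0:ℂ) 1, g z = z * deriv g z := by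
      intro z hz
      have h1 := hCid z hz
      simp only [hCf] at h1
      exact (div_eq_iff (hg' z hz)).mp h1
    -- Step 4 : second derivative vanishes, so deriv g is constant
    have hpunct : ∀ x ∈ ball (0:ℂ) 1, x ≠ 0 → deriv (deriv g) x = 0 := by
      intro x hx hx0
      have hEv : (fun w => w * deriv g w) =ᶠ[nhds x] g :=
        Filter.eventuallyEq_of_mem (isOpen_ball.mem_nhds hx) (fun w hw => (hgz w hw).symm)
      have h1 : deriv (fun w => w * deriv g w) x = deriv g x := hEv.deriv_eq
      rw [deriv_fun_mul differentiableAt_fun_id ((hA' x hx).differentiableAt)] at h1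
      simp only [deriv_id'', one_mul] at h1
      have h2 : x * deriv (deriv g) x = 0 := by linear_combination h1
      exact (mul_eq_zero.mp h2).resolve_left hx0
    have h2nd : ∀ x ∈ ball (0:ℂ) 1, deriv (deriv g) x = 0 := by
      intro x hx
      rcases eq_or_ne x 0 with rfl | hx0
      · have hc2 : ContinuousAt (deriv (deriv g)) 0 := (hA'.deriv 0 hg0mem).continuousAt
        have hev : deriv (deriv g) =ᶠ[nhdsWithin (0:ℂ) {(0:ℂ)}ᶜ] fun _ => 0 := by
          filter_upwards [mem_nhdsWithin_of_mem_nhds (isOpen_ball.mem_nhds hg0mem),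
            self_mem_nhdsWithin] with w hw hw0
          exact hpunct w hw hw0
        exact tendsto_nhds_unique hc2.continuousWithinAt
          (tendsto_const_nhds.congr' hev.symm)
      · exact hpunct x hx hx0
    have hconst : ∀ z ∈ ball (0:ℂ) 1, deriv g z = deriv g 0 := by
      intro z hz
      refine (convex_ball (0:ℂ) 1).is_const_of_fderivWithin_eq_zero
        hA'.differentiableOn (fun x hx => ?_) hz hg0mem
      rw [fderivWithin_of_isOpen isOpen_ball hx, ← toSpanSingleton_deriv, h2nd x hx]
      ext y
      simp
    set c := deriv g 0 with hc
    have hgc : ∀ z ∈ ball (0:ℂ) 1, g z = c * z := by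
      intro z hz
      rw [hgz z hz, hconst z hz]; ring
    -- Step 5 : |c| = 1
    have hb1 : ‖c‖ = 1 := by
      set b := ‖c‖ with hbdef
      have hbnn : 0 ≤ b := norm_nonneg _
      by_contra hne
      have hkey : ∀ ε : ℝ, 0 < ε → (b - 1)^2 / 2 < ε * (1 + b^2) := by
        intro ε hε
        obtain ⟨r, hrI, hP⟩ := H ε hε
        set M := max r (1 - ε) with hM
        have hM1 : M < 1 := max_lt hrI.2 (by linarith)
        set t := (M + 1)/2 with ht
        have htM : M < t := by simp only [ht]; linarith
        have ht1 : t < 1 := by simp only [ht]; linarith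
        have ht0 : 0 < t := by
          have hr1 := hrI.1
          have hr2 := le_max_left r (1 - ε)
          simp only [ht, hM]; linarith
        have htz : ‖(t:ℂ)‖ = t := by
          rw [Complex.norm_real, Real.norm_eq_abs]; exact abs_of_pos ht0
        have hmem : (t:ℂ) ∈ ball (0:ℂ) 1 := by
          rw [mem_ball_zero_iff, htz]; exact ht1
        have hbd := hP (t:ℂ)
          (by rw [htz]; exact lt_of_le_of_lt (le_max_left _ _) htM)
          (by rw [htz]; exact ht1)
        rw [hconst _ hmem, hgc _ hmem, norm_mul, htz, ← hbdef] at hbd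
        have h1 := (abs_lt.mp hbd).1
        have h1t : 1 - t ≤ ε/2 := by
          have hr2 := le_max_right r (1 - ε)
          simp only [ht, hM]; linarith
        have h1t2 : 1 - t^2 ≤ ε := by nlinarith
        have hbb : b^2 * (1 - t^2) ≤ b^2 * ε :=
          mul_le_mul_of_nonneg_left h1t2 (sq_nonneg b)
        nlinarith [mul_nonneg hε.le (sq_nonneg b)]
      have hq : 0 < (b - 1)^2 := by
        have hb0 : b - 1 ≠ 0 := sub_ne_zero.2 hne
        positivity
      have h := hkey ((b - 1)^2 / (8 * (1 + b^2))) (by positivity)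
      have heq2 : ((b - 1)^2 / (8 * (1 + b^2))) * (1 + b^2) = (b - 1)^2 / 8 := by
        field_simp
      rw [heq2] at h
      linarith
    -- Step 6 : c = 1
    have him : c.im = 0 := hg'0im
    have habs : ‖c‖ = |c.re| := by
      rw [Complex.norm_def, Complex.normSq_apply, him]
      simp [Real.sqrt_mul_self_eq_abs]
    have hre : c.re = 1 := by
      rw [habs, abs_of_pos hg'0re] at hb1
      exact hb1
    have hc1 : c = 1 := by
      apply Complex.ext <;> simp [hre, him]
    intro z hz
    rw [hgc z hz, hc1, one_mul]
  · -- backward direction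
    intro hid ε hε
    refine ⟨max (1 - ε) (1/2), ⟨lt_of_lt_of_le (by norm_num) (le_max_right _ _),
      max_lt (by linarith) (by norm_num)⟩, ?_⟩
    intro z h1 h2
    have hz : z ∈ ball (0:ℂ) 1 := by
      rw [mem_ball_zero_iff]; exact h2
    have hd1 : deriv g z = 1 := by
      have hEv : g =ᶠ[nhds z] id :=
        Filter.eventuallyEq_of_mem (isOpen_ball.mem_nhds hz) (fun w hw => hid w hw)
      rw [hEv.deriv_eq, deriv_id]
    rw [hd1, hid z hz]
    simp only [norm_one]
    have h1' : 1 - ε < ‖z‖ := lt_of_le_of_lt (le_max_left _ _) h1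
    have ha0 : 0 ≤ ‖z‖ := norm_nonneg _
    have hsq : ‖z‖ ^ 2 < 1 := by
      nlinarith [mul_pos (by linarith : (0:ℝ) < 1 - ‖z‖)
        (by linarith : (0:ℝ) < 1 + ‖z‖)]
    rw [_root_.abs_of_nonneg (by linarith : (0:ℝ) ≤ 1 - 1/2 * (1 + ‖z‖^2))]
    nlinarith [sq_nonneg (1 - ‖z‖)]
end

section
/- Let c > 1/2. Then there is no holomorphic function g : 𝔻 → ℂ with g(0) = 0, g'(0) > 0, and g'(z) ≠ 0 for all z ∈ 𝔻 (locally univalent) that satisfies the Beurling boundary condition lim_{|z|→1}(|g'(z)| − c(1 + |g(z)|²)) = 0 (i.e. for every ε > 0 there exists r ∈ (0,1) such that ||g'(z)| − c(1 + |g(z)|²)| < ε whenever r < |z| < 1). -/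
open Complex Metric ComplexConjugate

/-- For `c > 1/2`, the Beurling boundary value problem
`lim_{|z|→1} (|g'(z)| - c(1+|g(z)|²)) = 0` has no locally univalent solution in `ℋ₀(𝔻)`. -/
theorem beurling_spherical_supercritical (c : ℝ) (hc : 1 / 2 < c) :
    ¬ ∃ g : ℂ → ℂ, DifferentiableOn ℂ g (ball (0 : ℂ) 1) ∧ g 0 = 0 ∧
      0 < (deriv g 0).re ∧ (deriv g 0).im = 0 ∧
      (∀ z ∈ ball (0 : ℂ) 1, deriv g z ≠ 0) ∧
      (∀ ε > (0 : ℝ), ∃ r ∈ Set.Ioo (0 : ℝ) 1, ∀ z : ℂ,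
        r < ‖z‖ → ‖z‖ < 1 →
          |‖deriv g z‖ - c * (1 + ‖g z‖ ^ 2)| < ε) := by
  rintro ⟨g, hg, hg0, hre, -, hg', hbc⟩
  -- the derivative at the origin is nonzero
  have hd0 : deriv g 0 ≠ 0 := by
    intro h; rw [h] at hre; simp at hre
  -- choose ε and the radius r
  set ε : ℝ := (c - 1/2)/2 with hεdef
  have hε : 0 < ε := by rw [hεdef]; linarith
  obtain ⟨r₀, hr₀, hprop⟩ := hbc ε hε
  have hc1 : (0:ℝ) < 2*c+1 := by linarith
  set m : ℝ := max r₀ (2/(2*c+1)) with hmdef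
  have hm0 : 0 < m := lt_of_lt_of_le hr₀.1 (le_max_left _ _)
  have hm1 : m < 1 := by
    apply max_lt hr₀.2
    rw [div_lt_one hc1]; linarith
  set r : ℝ := (m+1)/2 with hrdef
  have hrpos : 0 < r := by rw [hrdef]; linarith
  have hr1 : r < 1 := by rw [hrdef]; linarith
  have hrm : m < r := by rw [hrdef]; linarith
  have hrr₀ : r₀ < r := lt_of_le_of_lt (le_max_left _ _) hrm
  have hrc : 2 / (2*c+1) < r := lt_of_le_of_lt (le_max_right _ _) hrm
  -- the auxiliary function q = (g z / z) / g' z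
  set q : ℂ → ℂ := fun z => dslope g 0 z / deriv g z with hqdef
  have hball : ball (0:ℂ) 1 ∈ nhds (0:ℂ) := isOpen_ball.mem_nhds (mem_ball_self one_pos)
  have hgderiv : DifferentiableOn ℂ (deriv g) (ball (0:ℂ) 1) :=
    ((hg.analyticOnNhd isOpen_ball).deriv).differentiableOn
  have hqdiff : DifferentiableOn ℂ q (ball (0:ℂ) 1) :=
    ((differentiableOn_dslope hball).mpr hg).div hgderiv hg'
  have hq0 : q 0 = 1 := by
    rw [hqdef]; simp only [dslope_same]; exact div_self hd0
  -- maximum modulus principle on the ball of radius r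
  have hsub : closedBall (0:ℂ) r ⊆ ball (0:ℂ) 1 := closedBall_subset_ball hr1
  have hclos : closure (ball (0:ℂ) r) = closedBall (0:ℂ) r := closure_ball _ (ne_of_gt hrpos)
  have hdc : DiffContOnCl ℂ q (ball (0:ℂ) r) := by
    refine ⟨hqdiff.mono (ball_subset_ball hr1.le), ?_⟩
    rw [hclos]
    exact hqdiff.continuousOn.mono hsub
  obtain ⟨z, hzf, hzmax⟩ :=
    Complex.exists_mem_frontier_isMaxOn_norm isBounded_ball (nonempty_ball.mpr hrpos) hdc
  rw [frontier_ball _ (ne_of_gt hrpos)] at hzf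
  have hzabs : ‖z‖ = r := mem_sphere_zero_iff_norm.mp hzf
  have hz1 : z ∈ ball (0:ℂ) 1 := by
    rw [mem_ball_zero_iff]; rw [hzabs]; exact hr1
  have hzne : z ≠ 0 := by
    intro h; rw [h] at hzabs; simp at hzabs; exact (ne_of_gt hrpos) hzabs.symm
  -- 1 ≤ ‖q z‖
  have hqz1 : 1 ≤ ‖q z‖ := by
    have h0mem : (0:ℂ) ∈ closure (ball (0:ℂ) r) := by
      rw [hclos]; exact mem_closedBall_self hrpos.le
    have := hzmax h0mem
    simpa [hq0] using this
  -- compute ‖q z‖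
  have hgz' : deriv g z ≠ 0 := hg' z hz1
  have hqzval : ‖q z‖ = ‖g z‖ / (r * ‖deriv g z‖) := by
    rw [hqdef]
    simp only [dslope_of_ne _ hzne, slope_def_field, hg0]
    rw [div_div]
    rw [norm_div, norm_mul]
    simp [hzabs]
  -- hence r * |g'(z)| ≤ |g(z)|
  have hkey : r * ‖deriv g z‖ ≤ ‖g z‖ := by
    have hpos : 0 < r * ‖deriv g z‖ := by
      apply mul_pos hrpos
      exact norm_pos_iff.mpr hgz'
    rw [hqzval, le_div_iff₀ hpos, one_mul] at hqz1
    exact hqz1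
  -- boundary condition at z
  have hbz := hprop z (by rw [hzabs]; exact hrr₀) (by rw [hzabs]; exact hr1)
  rw [abs_lt] at hbz
  -- AM-GM and final contradiction
  set X : ℝ := ‖g z‖ with hXdef
  set A : ℝ := ‖deriv g z‖ with hAdef
  have hX0 : 0 ≤ X := norm_nonneg _
  have hamgm : 2 * X ≤ 1 + X^2 := by nlinarith [sq_nonneg (X - 1)]
  have h1 : r * A ≤ X := hkey
  have h2 : c * (1 + X^2) - ε < A := by linarith [hbz.1]
  -- from 2/(2c+1) < r : (2c+1) * r > 2, and ε = (c-1/2)/2 so c - ε = (2c+1)/4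
  have h3 : 2 < (2*c+1) * r := by
    rw [div_lt_iff₀ hc1] at hrc; linarith
  nlinarith [mul_pos hrpos hε, sq_nonneg X, mul_nonneg hX0 hrpos.le]
end
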